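/- arXiv:0706.1419 — 6 statements merged into one kernel-verified Lean document; each statement's English description precedes it below -/
import Mathlib

section
/- The set of symmetric Borel probability measures on ℝ whose topological support is all of ℝ and which are concentrated on a set of Lebesgue measure zero (i.e., give full mass to some Borel set of Lebesgue measure zero) is dense in the set of symmetric Borel probability measures on ℝ for the topology of weak convergence. -/
open scoped ENNReal
open MeasureTheory Set Filter Topology

noncomputable section

/-- A probability measure on `ℝ` is symmetric if it is invariant under `t ↦ -t`. -/
def IsSymmetricPM (ν : ProbabilityMeasure ℝ) : Prop :=
  Measure.map (fun t : ℝ => -t) (ν : Measure ℝ) = (ν : Measure ℝ)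

/-! ### Auxiliary atomic symmetric measure with full support on a null set -/

/-- Weights for an atomic measure indexed by the rationals. -/
def w (q : ℚ) : ℝ≥0∞ := (2:ℝ≥0∞)⁻¹ ^ ((Denumerable.eqv ℚ) q + 2)

lemma w_pos (q : ℚ) : 0 < w q := by
  apply ENNReal.pow_pos; simp

lemma tsum_w : ∑' q : ℚ, w q = 2⁻¹ := by
  rw [← ((Denumerable.eqv ℚ).symm.tsum_eq w)]
  unfold w
  simp_rw [Equiv.apply_symm_apply, pow_add]
  rw [ENNReal.tsum_mul_right, ENNReal.tsum_geometric, ENNReal.one_sub_inv_two, inv_inv]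
  rw [pow_two, ← mul_assoc, ENNReal.mul_inv_cancel two_ne_zero ENNReal.ofNat_ne_top, one_mul]

/-- A symmetric purely atomic probability measure on `ℝ` whose atoms are the rationals. -/
def mu0 : Measure ℝ :=
  Measure.sum (fun q : ℚ => w q • (Measure.dirac (q:ℝ) + Measure.dirac (-(q:ℝ))))

lemma mu0_apply {s : Set ℝ} (hs : MeasurableSet s) :
    mu0 s = ∑' q : ℚ, w q * (Measure.dirac (q:ℝ) s + Measure.dirac (-(q:ℝ)) s) := by
  rw [mu0, Measure.sum_apply _ hs]
  rfl

/-- The set of rationals inside `ℝ`. -/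
def Qset : Set ℝ := Set.range (fun q : ℚ => (q : ℝ))

lemma Qset_countable : Qset.Countable := Set.countable_range _

lemma tsum_w_two : ∑' q : ℚ, w q * 2 = 1 := by
  rw [ENNReal.tsum_mul_right, tsum_w, ENNReal.inv_mul_cancel two_ne_zero ENNReal.ofNat_ne_top]

lemma mu0_Qset : mu0 Qset = 1 := by
  rw [mu0_apply Qset_countable.measurableSet]
  have h1 : ∀ q : ℚ, Measure.dirac (q:ℝ) Qset = 1 := fun q =>
    Measure.dirac_apply_of_mem ⟨q, rfl⟩
  have h2 : ∀ q : ℚ, Measure.dirac (-(q:ℝ)) Qset = 1 := fun q => by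
    refine Measure.dirac_apply_of_mem ⟨-q, ?_⟩
    push_cast; ring
  simp_rw [h1, h2, one_add_one_eq_two]
  exact tsum_w_two

instance : IsProbabilityMeasure mu0 := by
  constructor
  rw [mu0_apply MeasurableSet.univ]
  simp_rw [measure_univ, one_add_one_eq_two]
  exact tsum_w_two

lemma mu0_pos_Ioo {x ε : ℝ} (hε : 0 < ε) : 0 < mu0 (Set.Ioo (x - ε) (x + ε)) := by
  obtain ⟨q, hq1, hq2⟩ := exists_rat_btwn (by linarith : x - ε < x + ε)
  rw [mu0_apply measurableSet_Ioo]
  refine lt_of_lt_of_le ?_ (ENNReal.le_tsum q)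
  have h : Measure.dirac (q:ℝ) (Set.Ioo (x-ε) (x+ε)) = 1 :=
    Measure.dirac_apply_of_mem ⟨hq1, hq2⟩
  rw [h]
  refine ENNReal.mul_pos (w_pos q).ne' ?_
  intro hc
  rw [add_eq_zero] at hc
  exact one_ne_zero hc.1

lemma mu0_symm : Measure.map (fun t : ℝ => -t) mu0 = mu0 := by
  rw [mu0, Measure.map_sum measurable_neg.aemeasurable]
  congr 1
  funext q
  rw [Measure.map_smul, Measure.map_add _ _ measurable_neg,
    Measure.map_dirac' measurable_neg, Measure.map_dirac' measurable_neg]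
  simp [add_comm]

/-! ### A symmetric rounding map -/

/-- Symmetric (odd) rounding of `x` to the grid `(1/(n+1)) ℤ`. -/
def fr (n : ℕ) (x : ℝ) : ℝ :=
  if 0 ≤ x then (⌊(n+1 : ℝ) * x⌋ : ℝ)/(n+1) else -((⌊(n+1 : ℝ) * (-x)⌋ : ℝ)/(n+1))

lemma fr_measurable (n : ℕ) : Measurable (fr n) := by
  unfold fr
  exact Measurable.ite (measurableSet_le measurable_const measurable_id)
    ((measurable_from_top.comp (measurable_id.const_mul _).floor).div_const _)
    (((measurable_from_top.comp (measurable_id.neg.const_mul _).floor).div_const _).neg)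

lemma fr_neg (n : ℕ) (x : ℝ) : fr n (-x) = - fr n x := by
  rcases lt_trichotomy x 0 with h | h | h
  · rw [fr, fr, if_pos (by linarith), if_neg (not_le.mpr h), neg_neg]
  · simp [h, fr]
  · rw [fr, fr, if_neg (by simpa using h), if_pos h.le, neg_neg]

lemma fr_dist_nonneg (n : ℕ) {x : ℝ} (hx : 0 ≤ x) : |fr n x - x| ≤ 1/(n+1) := by
  rw [fr, if_pos hx]
  have hn : (0:ℝ) < n + 1 := by positivity
  rw [abs_le]
  constructor
  · rw [div_sub' hn.ne']
    rw [neg_le, ← neg_div, neg_sub]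
    rw [div_le_div_iff₀ hn hn]
    have := Int.lt_floor_add_one ((n+1:ℝ) * x)
    nlinarith [Int.floor_le ((n+1:ℝ) * x)]
  · rw [div_sub' hn.ne', div_le_div_iff₀ hn hn]
    nlinarith [Int.floor_le ((n+1:ℝ) * x)]

lemma fr_dist (n : ℕ) (x : ℝ) : |fr n x - x| ≤ 1/(n+1) := by
  rcases le_or_gt 0 x with h | h
  · exact fr_dist_nonneg n h
  · have := fr_dist_nonneg n (by linarith : (0:ℝ) ≤ -x)
    rw [fr_neg] at this
    rw [← abs_neg]
    have h2 : -(fr n x - x) = -fr n x + x := by ring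
    rw [h2]
    simpa [sub_eq_add_neg, neg_sub] using this

lemma fr_mem_range (n : ℕ) (x : ℝ) : fr n x ∈ Set.range (fun k : ℤ => (k:ℝ)/(n+1)) := by
  rw [fr]
  split_ifs
  · exact ⟨_, rfl⟩
  · exact ⟨-⌊(n+1 : ℝ) * (-x)⌋, by push_cast; ring⟩

lemma fr_tendsto (x : ℝ) : Tendsto (fun n => fr n x) atTop (𝓝 x) := by
  rw [tendsto_iff_dist_tendsto_zero]
  refine squeeze_zero (fun n => dist_nonneg) (fun n => ?_) tendsto_one_div_add_atTop_nhds_zero_nat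
  rw [Real.dist_eq]; exact fr_dist n x

/-! ### Main theorem -/

/-- The set of symmetric Borel probability measures on `ℝ` with full
topological support which are concentrated on a Lebesgue-null set is dense, for the topology
of weak convergence, in the set of symmetric Borel probability measures on `ℝ`. -/
theorem stmt2 :
    ∀ ν : ProbabilityMeasure ℝ, IsSymmetricPM ν →
      ν ∈ closure {ρ : ProbabilityMeasure ℝ | IsSymmetricPM ρ ∧
        (∀ x : ℝ, ∀ ε > 0, 0 < (ρ : Measure ℝ) (Set.Ioo (x - ε) (x + ε))) ∧
        (∃ N : Set ℝ, MeasurableSet N ∧ volume N = 0 ∧ (ρ : Measure ℝ) N = 1)} := by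
  intro ν hν
  -- the mixing coefficients
  set b : ℕ → ℝ≥0∞ := fun n => ((n:ℝ≥0∞)+1)⁻¹ with hbdef
  set a : ℕ → ℝ≥0∞ := fun n => 1 - b n with hadef
  have hb_le : ∀ n, b n ≤ 1 := fun n => ENNReal.inv_le_one.mpr le_add_self
  have hb_ne : ∀ n, b n ≠ 0 := fun n => ENNReal.inv_ne_zero.mpr (by simp)
  -- the discretized measures
  set Mn : ℕ → Measure ℝ := fun n => Measure.map (fr n) (ν : Measure ℝ) with hMn
  haveI hMp : ∀ n, IsProbabilityMeasure (Mn n) := fun n =>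
    Measure.isProbabilityMeasure_map (fr_measurable n).aemeasurable
  -- the approximating measures
  set m : ℕ → Measure ℝ := fun n => a n • Mn n + b n • mu0 with hm
  have hmp : ∀ n, IsProbabilityMeasure (m n) := by
    intro n
    haveI := hMp n
    constructor
    rw [hm]
    simp only [Measure.add_apply, Measure.smul_apply, smul_eq_mul, measure_univ, mul_one]
    exact tsub_add_cancel_of_le (hb_le n)
  set ρ : ℕ → ProbabilityMeasure ℝ := fun n => ⟨m n, hmp n⟩ with hρ
  have hcoe : ∀ n, (ρ n : Measure ℝ) = m n := fun n => rfl
  refine mem_closure_of_tendsto (f := ρ) (b := (atTop : Filter ℕ)) ?_ (Eventually.of_forall fun n => ?_)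
  · -- weak convergence ρ n → ν
    rw [ProbabilityMeasure.tendsto_iff_forall_integral_tendsto]
    intro g
    have key : ∀ n, ∫ ω, g ω ∂(m n) =
        (a n).toReal * (∫ x, g (fr n x) ∂(ν : Measure ℝ)) + (b n).toReal * (∫ x, g x ∂mu0) := by
      intro n
      haveI := hMp n
      haveI := hmp n
      have hint : Integrable g (m n) := g.integrable _
      rw [hm]
      rw [integral_add_measure (hint.mono_measure (Measure.le_add_right le_rfl))
        (hint.mono_measure (Measure.le_add_left le_rfl))]
      rw [integral_smul_measure, integral_smul_measure, hMn]
      rw [integral_map (fr_measurable n).aemeasurable g.continuous.aestronglyMeasurable]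
      simp [smul_eq_mul]
    have hI : Tendsto (fun n => ∫ x, g (fr n x) ∂(ν : Measure ℝ)) atTop
        (𝓝 (∫ x, g x ∂(ν : Measure ℝ))) := by
      refine tendsto_integral_of_dominated_convergence (fun _ => ‖g‖)
        (fun n => (g.continuous.measurable.comp (fr_measurable n)).aestronglyMeasurable)
        (integrable_const ‖g‖)
        (fun n => Eventually.of_forall fun x => g.norm_coe_le_norm _)
        (Eventually.of_forall fun x => ?_)
      exact (g.continuous.tendsto x).comp (fr_tendsto x)
    have hbt : Tendsto (fun n => (b n).toReal) atTop (𝓝 0) := by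
      have : ∀ n : ℕ, (b n).toReal = 1/((n:ℝ)+1) := by
        intro n
        rw [hbdef]
        rw [ENNReal.toReal_inv, one_div]
        congr 1
      simpa [this, one_div] using tendsto_one_div_add_atTop_nhds_zero_nat (𝕜 := ℝ)
    have hat : Tendsto (fun n => (a n).toReal) atTop (𝓝 1) := by
      have h1 : ∀ n : ℕ, (a n).toReal = 1 - (b n).toReal := by
        intro n
        rw [hadef, ENNReal.toReal_sub_of_le (hb_le n) ENNReal.one_ne_top, ENNReal.toReal_one]
      have h2 : Tendsto (fun n : ℕ => 1 - (b n).toReal) atTop (𝓝 (1 - 0)) :=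
        (tendsto_const_nhds (x := (1:ℝ))).sub hbt
      rw [sub_zero] at h2
      simpa [h1] using h2
    have hcomb := (hat.mul hI).add (hbt.mul_const (∫ x, g x ∂mu0))
    rw [one_mul, zero_mul, add_zero] at hcomb
    simp only [hcoe, key]
    exact hcomb
  · -- each ρ n is in the set
    haveI := hMp n
    refine ⟨?_, ?_, ?_⟩
    · -- symmetric
      show Measure.map (fun t : ℝ => -t) (m n) = m n
      rw [hm, Measure.map_add _ _ measurable_neg, Measure.map_smul, Measure.map_smul, mu0_symm]
      congr 1
      rw [hMn, Measure.map_map measurable_neg (fr_measurable n)]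
      have hodd : (fun t : ℝ => -t) ∘ fr n = fr n ∘ (fun t : ℝ => -t) := by
        funext x
        simp [Function.comp, ← fr_neg]
      rw [hodd, ← Measure.map_map (fr_measurable n) measurable_neg, hν]
    · -- full support
      intro x ε hε
      show 0 < m n (Set.Ioo (x - ε) (x + ε))
      rw [hm]
      simp only [Measure.add_apply, Measure.smul_apply, smul_eq_mul]
      refine lt_of_lt_of_le ?_ le_add_self
      exact ENNReal.mul_pos (hb_ne n) (mu0_pos_Ioo hε).ne'
    · -- concentrated on a null set
      refine ⟨Qset ∪ Set.range (fun k : ℤ => (k:ℝ)/(n+1)), ?_, ?_, ?_⟩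
      · exact (Qset_countable.union (Set.countable_range _)).measurableSet
      · exact (Qset_countable.union (Set.countable_range _)).measure_zero _
      · show m n _ = 1
        have hNm : MeasurableSet (Qset ∪ Set.range (fun k : ℤ => (k:ℝ)/(n+1))) :=
          (Qset_countable.union (Set.countable_range _)).measurableSet
        have h1 : Mn n (Qset ∪ Set.range (fun k : ℤ => (k:ℝ)/(n+1))) = 1 := by
          rw [hMn, Measure.map_apply (fr_measurable n) hNm]
          have : fr n ⁻¹' (Qset ∪ Set.range (fun k : ℤ => (k:ℝ)/(n+1))) = Set.univ := by
            rw [Set.eq_univ_iff_forall]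
            exact fun x => Set.mem_union_right _ (fr_mem_range n x)
          rw [this, measure_univ]
        have h2 : mu0 (Qset ∪ Set.range (fun k : ℤ => (k:ℝ)/(n+1))) = 1 := by
          refine le_antisymm prob_le_one ?_
          rw [← mu0_Qset]
          exact measure_mono Set.subset_union_left
        rw [hm]
        simp only [Measure.add_apply, Measure.smul_apply, smul_eq_mul, h1, h2, mul_one]
        exact tsub_add_cancel_of_le (hb_le n)

end
end

section
/- Let λ ∈ (0,1) and let μ be a symmetric Borel probability measure on ℝ. Then for every z ∈ ℂ∖[0,∞), H_μ(z) ∈ ℂ∖[0,∞); moreover, if Re z < 0 and Im z > 0 then Re H_μ(z) < 0. -/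
open MeasureTheory Complex Set Filter Topology

noncomputable section

/-- The nonnegative real axis, viewed as a subset of `ℂ`. -/
def posAxis : Set ℂ := {z : ℂ | z.im = 0 ∧ 0 ≤ z.re}

/-- `M_μ(z) = ∫ z t² / (1 - z t²) dμ(t)`. -/
def Mt (μ : Measure ℝ) (z : ℂ) : ℂ := ∫ t : ℝ, z * (t : ℂ) ^ 2 / (1 - z * (t : ℂ) ^ 2) ∂μ

/-- `H_μ(z) = z (1 + M_μ(z)) (1 + λ M_μ(z))`. -/
def Ht (l : ℝ) (μ : Measure ℝ) (z : ℂ) : ℂ :=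
  z * (1 + Mt μ z) * (1 + (l : ℂ) * Mt μ z)

namespace Stmt3Aux

lemma denom_ne {z : ℂ} (hz : z ∉ posAxis) (t : ℝ) : 1 - z * (t : ℂ) ^ 2 ≠ 0 := by
  intro h
  have h1 : z * (t : ℂ) ^ 2 = 1 := by linear_combination -h
  have ht : t ≠ 0 := by rintro rfl; simp at h1
  have ht2 : ((t : ℂ)) ^ 2 ≠ 0 := pow_ne_zero _ (Complex.ofReal_ne_zero.2 ht)
  have hz2 : z = (((t ^ 2)⁻¹ : ℝ) : ℂ) := by
    push_cast
    field_simp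
    rw [one_div]; exact eq_inv_of_mul_eq_one_left h1
  refine hz ⟨by rw [hz2]; exact Complex.ofReal_im _, ?_⟩
  rw [hz2]
  simp only [Complex.ofReal_re]
  positivity

lemma cont_f (z : ℂ) (hz : z ∉ posAxis) :
    Continuous (fun t : ℝ => z * (t : ℂ) ^ 2 / (1 - z * (t : ℂ) ^ 2)) := by
  apply Continuous.div
  · fun_prop
  · fun_prop
  · exact fun t => denom_ne hz t

lemma bound_f (z : ℂ) (hz : z ∉ posAxis) :
    ∃ C : ℝ, ∀ t : ℝ, ‖z * (t : ℂ) ^ 2 / (1 - z * (t : ℂ) ^ 2)‖ ≤ C := by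
  by_cases him : z.im = 0
  · have hre : z.re < 0 := by
      by_contra hre; exact hz ⟨him, not_lt.1 hre⟩
    refine ⟨1, fun t => ?_⟩
    have hd := denom_ne hz t
    rw [norm_div, div_le_one (norm_pos_iff.2 hd)]
    have hzx : z = ((z.re : ℝ) : ℂ) := by
      apply Complex.ext <;> simp [him]
    rw [hzx]
    have e1 : ((z.re : ℝ) : ℂ) * (t : ℂ) ^ 2 = ((z.re * t ^ 2 : ℝ) : ℂ) := by push_cast; ring
    have e2 : 1 - ((z.re : ℝ) : ℂ) * (t : ℂ) ^ 2 = ((1 - z.re * t ^ 2 : ℝ) : ℂ) := by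
      push_cast; ring
    rw [e2, e1, Complex.norm_real, Complex.norm_real, Real.norm_eq_abs, Real.norm_eq_abs]
    rw [_root_.abs_of_nonpos (by nlinarith [sq_nonneg t]),
      _root_.abs_of_nonneg (by nlinarith [sq_nonneg t] : (0:ℝ) ≤ 1 - z.re * t ^ 2)]
    nlinarith [sq_nonneg t]
  · refine ⟨‖z‖ / |z.im|, fun t => ?_⟩
    rcases eq_or_ne t 0 with rfl | ht
    · simp
      positivity
    · have hd := denom_ne hz t
      have h1 : |z.im| * t ^ 2 ≤ ‖1 - z * (t : ℂ) ^ 2‖ := by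
        have := Complex.abs_im_le_norm (1 - z * (t : ℂ) ^ 2)
        refine le_trans (le_of_eq ?_) this
        have : (1 - z * (t : ℂ) ^ 2).im = -(z.im * t ^ 2) := by
          simp [Complex.sub_im, Complex.mul_im, ← Complex.ofReal_pow, Complex.ofReal_re,
            Complex.ofReal_im]
        rw [this, abs_neg, abs_mul, _root_.abs_of_nonneg (sq_nonneg t)]
      have ht2 : (0 : ℝ) < t ^ 2 := by positivity
      have him' : (0 : ℝ) < |z.im| := abs_pos.2 him
      rw [norm_div]
      have hnum : ‖z * (t : ℂ) ^ 2‖ = ‖z‖ * t ^ 2 := by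
        rw [norm_mul, norm_pow, Complex.norm_real, Real.norm_eq_abs, _root_.sq_abs]
      rw [hnum]
      rw [div_le_div_iff₀ (norm_pos_iff.2 hd) him']
      calc ‖z‖ * t ^ 2 * |z.im| = ‖z‖ * (|z.im| * t ^ 2) := by ring
        _ ≤ ‖z‖ * ‖1 - z * (t : ℂ) ^ 2‖ := by
            exact mul_le_mul_of_nonneg_left h1 (norm_nonneg z)
        _ = ‖z‖ * ‖1 - z * (t : ℂ) ^ 2‖ := rfl

lemma integrable_f (z : ℂ) (hz : z ∉ posAxis) (μ : Measure ℝ) [IsProbabilityMeasure μ] :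
    Integrable (fun t : ℝ => z * (t : ℂ) ^ 2 / (1 - z * (t : ℂ) ^ 2)) μ := by
  obtain ⟨C, hC⟩ := bound_f z hz
  exact (integrable_const C).mono' (cont_f z hz).aestronglyMeasurable (ae_of_all _ hC)


lemma pt_eq (z : ℂ) (hz : z ∉ posAxis) (t : ℝ) :
    1 / (1 - z * (t : ℂ) ^ 2) = 1 + z * (t : ℂ) ^ 2 / (1 - z * (t : ℂ) ^ 2) := by
  have h := denom_ne hz t
  field_simp
  ring

lemma integrable_g (z : ℂ) (hz : z ∉ posAxis) (μ : Measure ℝ) [IsProbabilityMeasure μ] :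
    Integrable (fun t : ℝ => 1 / (1 - z * (t : ℂ) ^ 2)) μ := by
  have h := (integrable_const (1 : ℂ)).add (integrable_f z hz μ)
  exact h.congr (ae_of_all _ fun t => (pt_eq z hz t).symm)

lemma oneM_eq (z : ℂ) (hz : z ∉ posAxis) (μ : Measure ℝ) [IsProbabilityMeasure μ] :
    1 + Mt μ z = ∫ t : ℝ, 1 / (1 - z * (t : ℂ) ^ 2) ∂μ := by
  have h : (∫ t : ℝ, 1 / (1 - z * (t : ℂ) ^ 2) ∂μ)
      = ∫ t : ℝ, (1 + z * (t : ℂ) ^ 2 / (1 - z * (t : ℂ) ^ 2)) ∂μ := by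
    refine integral_congr_ae (ae_of_all _ fun t => pt_eq z hz t)
  rw [h, integral_add (integrable_const 1) (integrable_f z hz μ), integral_const, probReal_univ]
  simp [Mt]

lemma A_eq (z : ℂ) (hz : z ∉ posAxis) (μ : Measure ℝ) [IsProbabilityMeasure μ] :
    z * (1 + Mt μ z) = ∫ t : ℝ, z / (1 - z * (t : ℂ) ^ 2) ∂μ := by
  rw [oneM_eq z hz μ, ← integral_const_mul]
  refine integral_congr_ae (ae_of_all _ fun t => ?_)
  simp [mul_one_div, div_eq_mul_inv]

lemma g_im (z : ℂ) (hz : z ∉ posAxis) (t : ℝ) :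
    (z / (1 - z * (t : ℂ) ^ 2)).im = z.im / Complex.normSq (1 - z * (t : ℂ) ^ 2) := by
  rw [Complex.div_im, div_sub_div_same]
  congr 1
  simp [Complex.sub_im, Complex.sub_re, Complex.mul_im, Complex.mul_re, ← Complex.ofReal_pow,
    Complex.ofReal_re, Complex.ofReal_im]
  ring

lemma Aim_pos (z : ℂ) (hz : 0 < z.im) (μ : Measure ℝ) [IsProbabilityMeasure μ] :
    0 < (z * (1 + Mt μ z)).im := by
  have hz' : z ∉ posAxis := fun h => by simp [posAxis] at h; linarith [h.1 ▸ hz]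
  rw [A_eq z hz' μ]
  have hg : Integrable (fun t : ℝ => z / (1 - z * (t : ℂ) ^ 2)) μ := by
    have h := (integrable_g z hz' μ).const_mul z
    refine h.congr (ae_of_all _ fun t => ?_)
    simp [mul_one_div, div_eq_mul_inv]
  have him := integral_im (μ := μ) hg
  simp only [RCLike.im_eq_complex_im] at him
  rw [← him]
  have hpt : ∀ t : ℝ, 0 < (z / (1 - z * (t : ℂ) ^ 2)).im := by
    intro t
    rw [g_im z hz' t]
    exact div_pos hz (Complex.normSq_pos.2 (denom_ne hz' t))
  refine (integral_pos_iff_support_of_nonneg (fun t => (hpt t).le) hg.im).2 ?_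
  have hs : (Function.support fun t : ℝ => (z / (1 - z * (t : ℂ) ^ 2)).im) = Set.univ :=
    Set.eq_univ_of_forall fun t => Function.mem_support.2 (hpt t).ne'
  rw [hs, measure_univ]
  norm_num

lemma Az_im_nonneg (z : ℂ) (hz : 0 < z.im) (μ : Measure ℝ) [IsProbabilityMeasure μ] :
    0 ≤ ((starRingEnd ℂ) z * (z * (1 + Mt μ z))).im := by
  have hz' : z ∉ posAxis := fun h => by simp [posAxis] at h; linarith [h.1 ▸ hz]
  rw [A_eq z hz' μ, ← integral_const_mul]
  have hg : Integrable (fun t : ℝ => (starRingEnd ℂ) z * (z / (1 - z * (t : ℂ) ^ 2))) μ := by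
    have h := (integrable_g z hz' μ).const_mul ((starRingEnd ℂ) z * z)
    refine h.congr (ae_of_all _ fun t => ?_)
    simp [mul_one_div, mul_div_assoc, div_eq_mul_inv, mul_assoc]
  have him := integral_im (μ := μ) hg
  simp only [RCLike.im_eq_complex_im] at him
  rw [← him]
  refine integral_nonneg fun t => ?_
  show (0:ℝ) ≤ ((starRingEnd ℂ) z * (z / (1 - z * (t : ℂ) ^ 2))).im
  have he : (starRingEnd ℂ) z * (z / (1 - z * (t : ℂ) ^ 2))
      = ((Complex.normSq z : ℝ) : ℂ) / (1 - z * (t : ℂ) ^ 2) := by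
    rw [mul_div_assoc', mul_comm ((starRingEnd ℂ) z) z, Complex.mul_conj]
  have hval : ((((Complex.normSq z : ℝ) : ℂ)) / (1 - z * (t : ℂ) ^ 2)).im
      = Complex.normSq z * (z.im * t ^ 2) / Complex.normSq (1 - z * (t : ℂ) ^ 2) := by
    rw [Complex.div_im]
    simp [Complex.sub_im, Complex.sub_re, Complex.mul_im, Complex.mul_re, ← Complex.ofReal_pow,
      Complex.ofReal_re, Complex.ofReal_im]
    ring
  rw [he, hval]
  have h1 : (0:ℝ) ≤ Complex.normSq z * (z.im * t ^ 2) := by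
    have h2 := Complex.normSq_nonneg z
    have h3 : (0:ℝ) ≤ z.im * t ^ 2 := mul_nonneg hz.le (sq_nonneg t)
    exact mul_nonneg h2 h3
  exact div_nonneg h1 (Complex.normSq_nonneg _)


section Upper

variable {l : ℝ} (hl0 : 0 < l) (hl1 : l < 1) (μ : Measure ℝ) [IsProbabilityMeasure μ]
  {z : ℂ} (hz : 0 < z.im)

/-- Component facts in the upper half plane. -/
lemma components (hl0 : 0 < l) (hl1 : l < 1) {z : ℂ} (hz : 0 < z.im) :
    let A := z * (1 + Mt μ z); let B := 1 + (l : ℂ) * Mt μ z;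
    0 < A.im ∧ 0 ≤ B.im ∧ 0 < z.re * B.im + z.im * B.re ∧
      0 ≤ z.re * A.im - z.im * A.re := by
  intro A B
  have ha2 : 0 < A.im := Aim_pos z hz μ
  have haz0 : 0 ≤ ((starRingEnd ℂ) z * A).im := Az_im_nonneg z hz μ
  have haz : 0 ≤ z.re * A.im - z.im * A.re := by
    have : ((starRingEnd ℂ) z * A).im = z.re * A.im - z.im * A.re := by
      simp [Complex.mul_im, Complex.conj_re, Complex.conj_im]
      ring
    linarith [this ▸ haz0]
  have hzB : z * B = (1 - (l : ℂ)) * z + (l : ℂ) * A := by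
    simp only [A, B]; ring
  have e1 : z.re * B.re - z.im * B.im = (1 - l) * z.re + l * A.re := by
    have := congrArg Complex.re hzB
    simpa [Complex.mul_re, Complex.add_re, Complex.sub_re, Complex.mul_im, Complex.add_im,
      Complex.sub_im, Complex.one_re, Complex.one_im, Complex.ofReal_re, Complex.ofReal_im]
      using this
  have e2 : z.re * B.im + z.im * B.re = (1 - l) * z.im + l * A.im := by
    have := congrArg Complex.im hzB
    simpa [Complex.mul_re, Complex.add_re, Complex.sub_re, Complex.mul_im, Complex.add_im,
      Complex.sub_im, Complex.one_re, Complex.one_im, Complex.ofReal_re, Complex.ofReal_im]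
      using this
  have hb2 : 0 ≤ B.im := by
    have key : (z.re ^ 2 + z.im ^ 2) * B.im = l * (z.re * A.im - z.im * A.re) := by
      linear_combination z.re * e2 - z.im * e1
    have hne : 0 < z.re ^ 2 + z.im ^ 2 := by positivity
    nlinarith [mul_nonneg hl0.le haz]
  have hbz : 0 < z.re * B.im + z.im * B.re := by
    rw [e2]; nlinarith
  exact ⟨ha2, hb2, hbz, haz⟩

lemma upper_notin (hl0 : 0 < l) (hl1 : l < 1) (μ : Measure ℝ) [IsProbabilityMeasure μ]
    {z : ℂ} (hz : 0 < z.im) : Ht l μ z ∉ posAxis := by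
  obtain ⟨ha2, hb2, hbz, -⟩ := components μ hl0 hl1 hz
  set A := z * (1 + Mt μ z) with hA
  set B := 1 + (l : ℂ) * Mt μ z with hB
  rintro ⟨him, hre⟩
  have hH : Ht l μ z = A * B := rfl
  rw [hH, Complex.mul_im] at him
  rw [hH, Complex.mul_re] at hre
  set a1 := A.re; set a2 := A.im; set b1 := B.re; set b2 := B.im
  set x := z.re; set y := z.im
  rcases eq_or_lt_of_le hb2 with hb20 | hb2p
  · -- b2 = 0
    have hxb2 : x * b2 = 0 := by rw [← hb20]; ring
    have hab2 : a1 * b2 = 0 := by rw [← hb20]; ring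
    have hyb1 : 0 < y * b1 := by linarith
    have hb1 : 0 < b1 := by nlinarith
    nlinarith [mul_pos ha2 hb1]
  · have h4 : 0 ≤ (a1 * b1 - a2 * b2) * b2 := mul_nonneg hre hb2p.le
    have h5 : a1 * b2 * b1 = -(a2 * b1 ^ 2) := by linear_combination b1 * him
    nlinarith [mul_pos (mul_pos ha2 hb2p) hb2p, mul_nonneg ha2.le (sq_nonneg b1)]

lemma upper_re_neg (hl0 : 0 < l) (hl1 : l < 1) (μ : Measure ℝ) [IsProbabilityMeasure μ]
    {z : ℂ} (hx : z.re < 0) (hz : 0 < z.im) : (Ht l μ z).re < 0 := by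
  obtain ⟨ha2, hb2, hbz, haz⟩ := components μ hl0 hl1 hz
  set A := z * (1 + Mt μ z) with hA
  set B := 1 + (l : ℂ) * Mt μ z with hB
  have hH : Ht l μ z = A * B := rfl
  rw [hH, Complex.mul_re]
  set a1 := A.re; set a2 := A.im; set b1 := B.re; set b2 := B.im
  set x := z.re; set y := z.im
  have ha1 : a1 < 0 := by nlinarith [mul_neg_of_neg_of_pos hx ha2]
  have hb1 : 0 < b1 := by nlinarith [mul_nonneg (neg_nonneg.2 hx.le) hb2]
  nlinarith [mul_pos (neg_pos.2 ha1) hb1, mul_nonneg ha2.le hb2]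

end Upper

lemma Mt_conj (μ : Measure ℝ) (z : ℂ) : Mt μ ((starRingEnd ℂ) z) = (starRingEnd ℂ) (Mt μ z) := by
  rw [Mt, Mt, ← integral_conj]
  refine integral_congr_ae (ae_of_all _ fun t => ?_)
  simp [map_div₀, map_sub, map_mul, map_one, map_pow, Complex.conj_ofReal]

lemma Ht_conj (l : ℝ) (μ : Measure ℝ) (z : ℂ) :
    Ht l μ ((starRingEnd ℂ) z) = (starRingEnd ℂ) (Ht l μ z) := by
  rw [Ht, Ht, Mt_conj]
  simp [map_mul, map_add, map_one, Complex.conj_ofReal]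

section RealCase

variable {z : ℂ} (him : z.im = 0) (hre : z.re < 0)

lemma real_denom_im (him : z.im = 0) (t : ℝ) : (1 - z * (t : ℂ) ^ 2).im = 0 := by
  simp [Complex.sub_im, Complex.mul_im, ← Complex.ofReal_pow, Complex.ofReal_im,
    Complex.ofReal_re, him]

lemma real_Mt_im (him : z.im = 0) (hre : z.re < 0) (μ : Measure ℝ) [IsProbabilityMeasure μ] :
    (Mt μ z).im = 0 := by
  have hz' : z ∉ posAxis := fun h => absurd h.2 (not_le.2 hre)
  have hf := integrable_f z hz' μ
  have h := integral_im (μ := μ) hf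
  simp only [RCLike.im_eq_complex_im] at h
  rw [Mt, ← h]
  have : ∀ t : ℝ, (z * (t : ℂ) ^ 2 / (1 - z * (t : ℂ) ^ 2)).im = 0 := by
    intro t
    rw [Complex.div_im]
    have h1 : (z * (t : ℂ) ^ 2).im = 0 := by
      simp [Complex.mul_im, ← Complex.ofReal_pow, Complex.ofReal_im, Complex.ofReal_re, him]
    rw [h1, real_denom_im him t]
    simp
  simp [this]

lemma real_oneM_pos (him : z.im = 0) (hre : z.re < 0) (μ : Measure ℝ) [IsProbabilityMeasure μ] :
    0 < 1 + (Mt μ z).re := by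
  have hz' : z ∉ posAxis := fun h => absurd h.2 (not_le.2 hre)
  have hg := integrable_g z hz' μ
  have h1M : ((1 : ℂ) + Mt μ z).re = ∫ t : ℝ, (1 / (1 - z * (t : ℂ) ^ 2)).re ∂μ := by
    rw [oneM_eq z hz' μ]
    have h := integral_re (μ := μ) hg
    simp only [RCLike.re_eq_complex_re] at h
    rw [← h]
  have hpt : ∀ t : ℝ, 0 < (1 / (1 - z * (t : ℂ) ^ 2)).re := by
    intro t
    rw [Complex.div_re]
    have h2 : (1 - z * (t : ℂ) ^ 2).re = 1 - z.re * t ^ 2 := by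
      simp [Complex.sub_re, Complex.mul_re, ← Complex.ofReal_pow, Complex.ofReal_im,
        Complex.ofReal_re]
    rw [real_denom_im him t, h2]
    simp only [Complex.one_re, Complex.one_im]
    have h3 : 0 < 1 - z.re * t ^ 2 := by nlinarith [sq_nonneg t]
    have h4 : 0 < Complex.normSq (1 - z * (t : ℂ) ^ 2) :=
      Complex.normSq_pos.2 (denom_ne hz' t)
    positivity
  have : ((1 : ℂ) + Mt μ z).re = 1 + (Mt μ z).re := by simp
  rw [← this, h1M]
  refine (integral_pos_iff_support_of_nonneg (fun t => (hpt t).le) ?_).2 ?_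
  · have := hg.re
    simpa only [RCLike.re_eq_complex_re] using this
  · have hs : (Function.support fun t : ℝ => (1 / (1 - z * (t : ℂ) ^ 2)).re) = Set.univ :=
      Set.eq_univ_of_forall fun t => Function.mem_support.2 (hpt t).ne'
    rw [hs, measure_univ]
    norm_num

lemma real_case (l : ℝ) (hl0 : 0 < l) (hl1 : l < 1) (μ : Measure ℝ) [IsProbabilityMeasure μ]
    {z : ℂ} (him : z.im = 0) (hre : z.re < 0) : (Ht l μ z).re < 0 := by
  have hM := real_Mt_im him hre μ
  have h1 := real_oneM_pos him hre μ
  have h2 : 0 < 1 + l * (Mt μ z).re := by nlinarith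
  rw [Ht, Complex.mul_re, Complex.mul_re, Complex.mul_im]
  simp only [Complex.add_re, Complex.add_im, Complex.one_re, Complex.one_im,
    Complex.mul_re, Complex.mul_im, Complex.ofReal_re, Complex.ofReal_im, him, hM]
  ring_nf
  nlinarith [mul_pos h1 h2]

end RealCase

end Stmt3Aux


/-- For `λ ∈ (0,1)` and a symmetric probability measure `μ` on `ℝ`,
`H_μ` maps `ℂ∖[0,∞)` into itself, and maps the second quadrant into the open left
half-plane. -/
theorem stmt3 (l : ℝ) (hl : l ∈ Set.Ioo (0 : ℝ) 1) (μ : Measure ℝ) [IsProbabilityMeasure μ]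
    (hsym : Measure.map (fun t : ℝ => -t) μ = μ) :
    (∀ z : ℂ, z ∉ posAxis → Ht l μ z ∉ posAxis) ∧
    (∀ z : ℂ, z.re < 0 → 0 < z.im → (Ht l μ z).re < 0) := by
  obtain ⟨hl0, hl1⟩ := hl
  constructor
  · intro z hz
    rcases lt_trichotomy z.im 0 with hneg | h0 | hpos
    · -- lower half plane: conjugate
      have hw : 0 < ((starRingEnd ℂ) z).im := by simpa using neg_pos.2 hneg
      have hnot := Stmt3Aux.upper_notin hl0 hl1 μ hw
      intro hmem
      apply hnot
      have : Ht l μ ((starRingEnd ℂ) z) = (starRingEnd ℂ) (Ht l μ z) := Stmt3Aux.Ht_conj l μ z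
      rw [this]
      exact ⟨by simpa using hmem.1, by simpa using hmem.2⟩
    · -- real case
      have hre : z.re < 0 := by
        by_contra h
        exact hz ⟨h0, not_lt.1 h⟩
      have := Stmt3Aux.real_case l hl0 hl1 μ h0 hre
      rintro ⟨-, h2⟩
      linarith
    · exact Stmt3Aux.upper_notin hl0 hl1 μ hpos
  · intro z hx hy
    exact Stmt3Aux.upper_re_neg hl0 hl1 μ hx hy

end
end

section
/- Let λ ∈ (0,1) and let μ be a symmetric Borel probability measure on ℝ. Then lim_{x→−∞} H_μ(x) = −(1−λ)·∫ t^{−2} dμ(t) in [−∞, 0) (with the convention 1/0 = +∞, so the limit is −∞ whenever ∫ t^{−2} dμ(t) = +∞, in particular whenever μ({0}) > 0), and lim_{x→−∞} H_μ(x)/x = λ·μ({0})² + (1−λ)·μ({0}). -/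
open MeasureTheory Complex Set Filter Topology

noncomputable section

/-- `∫ t⁻² dμ(t)` with the convention `1/0 = +∞`, computed in `ℝ≥0∞`. -/
def invSqInt (μ : Measure ℝ) : ENNReal := ∫⁻ t : ℝ, (ENNReal.ofReal (t ^ 2))⁻¹ ∂μ

/-- real version of `Mt` on the negative axis -/
def mR (μ : Measure ℝ) (x : ℝ) : ℝ := ∫ t : ℝ, ((1 - x * t ^ 2)⁻¹ - 1) ∂μ

lemma one_le_denom {x t : ℝ} (hx : x ≤ 0) : 1 ≤ 1 - x * t ^ 2 := by nlinarith [sq_nonneg t]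

lemma meas_mRint (x : ℝ) : Measurable (fun t : ℝ => (1 - x * t ^ 2)⁻¹ - 1) := by
  have : Measurable (fun t : ℝ => 1 - x * t ^ 2) :=
    measurable_const.sub ((measurable_id.pow_const 2).const_mul x)
  exact this.inv.sub measurable_const

lemma int_mRint (μ : Measure ℝ) [IsProbabilityMeasure μ] {x : ℝ} (hx : x ≤ 0) :
    Integrable (fun t : ℝ => (1 - x * t ^ 2)⁻¹ - 1) μ := by
  refine (integrable_const (1 : ℝ)).mono' (meas_mRint x).aestronglyMeasurable ?_
  refine ae_of_all _ fun t => ?_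
  have h1 := one_le_denom (t := t) hx
  have h2 : 0 < (1 - x * t ^ 2)⁻¹ := by positivity
  have h3 : (1 - x * t ^ 2)⁻¹ ≤ 1 := inv_le_one_of_one_le₀ h1
  rw [Real.norm_eq_abs, abs_le]
  constructor <;> linarith

lemma Mt_eq (μ : Measure ℝ) [IsProbabilityMeasure μ] {x : ℝ} (hx : x < 0) :
    Mt μ (x : ℂ) = ((mR μ x : ℝ) : ℂ) := by
  unfold Mt
  rw [show ((mR μ x : ℝ) : ℂ) = ∫ t : ℝ, (((1 - x * t ^ 2)⁻¹ - 1 : ℝ) : ℂ) ∂μ from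
    integral_ofReal.symm]
  refine integral_congr_ae (ae_of_all _ fun t => ?_)
  dsimp only
  have h1 : (1 : ℝ) - x * t ^ 2 ≠ 0 := by
    have := one_le_denom (t := t) hx.le; linarith
  have hc : (x : ℂ) * (t : ℂ) ^ 2 = ((x * t ^ 2 : ℝ) : ℂ) := by push_cast; ring
  rw [hc]
  have h2 : ((1 : ℂ) - ((x * t ^ 2 : ℝ) : ℂ)) = (((1 - x * t ^ 2 : ℝ)) : ℂ) := by push_cast; ring
  rw [h2, ← Complex.ofReal_div]
  norm_cast
  field_simp
  ring

lemma mR_tendsto (μ : Measure ℝ) [IsProbabilityMeasure μ] :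
    Tendsto (mR μ) atBot (𝓝 ((μ ({0} : Set ℝ)).toReal - 1)) := by
  have key : Tendsto (mR μ) atBot
      (𝓝 (∫ t : ℝ, (({0} : Set ℝ).indicator (fun _ => (1 : ℝ)) t - 1) ∂μ)) := by
    refine tendsto_integral_filter_of_dominated_convergence (fun _ => (1 : ℝ))
      ?_ ?_ (integrable_const 1) ?_
    · exact Eventually.of_forall fun x => (meas_mRint x).aestronglyMeasurable
    · filter_upwards [eventually_le_atBot (0 : ℝ)] with x hx
      refine ae_of_all _ fun t => ?_
      have h1 := one_le_denom (t := t) hx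
      have h2 : 0 < (1 - x * t ^ 2)⁻¹ := by positivity
      have h3 : (1 - x * t ^ 2)⁻¹ ≤ 1 := inv_le_one_of_one_le₀ h1
      rw [Real.norm_eq_abs, abs_le]
      constructor <;> linarith
    · refine ae_of_all _ fun t => ?_
      by_cases ht : t = 0
      · subst ht
        simp only [ne_eq, OfNat.ofNat_ne_zero, not_false_eq_true, zero_pow, mul_zero, sub_zero,
          inv_one, sub_self, indicator_of_mem (mem_singleton (0:ℝ))]
        exact tendsto_const_nhds
      · have ht2 : (0 : ℝ) < t ^ 2 := by positivity
        have h1 : Tendsto (fun x : ℝ => x * t ^ 2) atBot atBot :=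
          tendsto_id.atBot_mul_const ht2
        have h2 : Tendsto (fun x : ℝ => 1 - x * t ^ 2) atBot atTop := by
          have := tendsto_neg_atBot_atTop.comp h1
          have h3 := tendsto_atTop_add_const_left atBot (1 : ℝ) this
          refine h3.congr fun x => ?_
          simp [Function.comp]; ring
        have h4 : Tendsto (fun x : ℝ => (1 - x * t ^ 2)⁻¹) atBot (𝓝 0) :=
          h2.inv_tendsto_atTop
        have h5 := h4.sub_const 1
        have : ({0} : Set ℝ).indicator (fun _ => (1:ℝ)) t - 1 = 0 - 1 := by
          rw [Set.indicator_of_notMem (by simpa using ht)]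
        rw [this]
        exact h5
  have : (∫ t : ℝ, (({0} : Set ℝ).indicator (fun _ => (1 : ℝ)) t - 1) ∂μ)
      = (μ ({0} : Set ℝ)).toReal - 1 := by
    rw [integral_sub ?_ (integrable_const 1)]
    · rw [integral_const]
      simp only [probReal_univ, ENNReal.toReal_one, smul_eq_mul, one_mul]
      congr 1
      have : (fun t : ℝ => ({0} : Set ℝ).indicator (fun _ => (1:ℝ)) t)
          = ({0} : Set ℝ).indicator (1 : ℝ → ℝ) := rfl
      rw [this, integral_indicator_one (measurableSet_singleton 0)]
      rfl
    · exact (integrable_const (1:ℝ)).indicator (measurableSet_singleton 0)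
  rwa [this] at key

lemma Mt_tendsto (μ : Measure ℝ) [IsProbabilityMeasure μ] :
    Tendsto (fun x : ℝ => Mt μ (x : ℂ)) atBot
      (𝓝 (((μ ({0} : Set ℝ)).toReal - 1 : ℝ) : ℂ)) := by
  have h := (Complex.continuous_ofReal.tendsto _).comp (mR_tendsto μ)
  refine h.congr' ?_
  filter_upwards [eventually_lt_atBot (0 : ℝ)] with x hx
  exact (Mt_eq μ hx).symm

/-- `max 1 (-x)`, an antitone positive reparametrization of the negative axis. -/
def qf (x : ℝ) : ℝ := max 1 (-x)

def fG (x t : ℝ) : ℝ := qf x / (1 + qf x * t ^ 2)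

def Gl (μ : Measure ℝ) (x : ℝ) : ENNReal := ∫⁻ t : ℝ, ENNReal.ofReal (fG x t) ∂μ

def FR (μ : Measure ℝ) (x : ℝ) : ℝ := ∫ t : ℝ, x / (1 - x * t ^ 2) ∂μ

lemma qf_pos (x : ℝ) : 0 < qf x := lt_of_lt_of_le one_pos (le_max_left _ _)

lemma qf_anti : Antitone qf := fun a b hab => max_le_max le_rfl (neg_le_neg hab)

lemma frac_mono {a b t : ℝ} (ha : 0 ≤ a) (hab : a ≤ b) :
    a / (1 + a * t ^ 2) ≤ b / (1 + b * t ^ 2) := by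
  have h1 : 0 < 1 + a * t ^ 2 := by nlinarith [sq_nonneg t]
  have h2 : 0 < 1 + b * t ^ 2 := by nlinarith [sq_nonneg t]
  rw [div_le_div_iff₀ h1 h2]
  nlinarith [sq_nonneg t]

lemma fG_nonneg (x t : ℝ) : 0 ≤ fG x t := by
  have h0 := qf_pos x
  have h1 : 0 < 1 + qf x * t ^ 2 := by nlinarith [sq_nonneg t]
  exact (div_pos h0 h1).le

lemma fG_meas (x : ℝ) : Measurable (fun t : ℝ => fG x t) :=
  measurable_const.div (measurable_const.add ((measurable_id.pow_const 2).const_mul _))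

lemma fG_le_qf (x t : ℝ) : fG x t ≤ qf x := by
  have h0 := qf_pos x
  have h1 : (1 : ℝ) ≤ 1 + qf x * t ^ 2 := by nlinarith [sq_nonneg t]
  exact div_le_self h0.le h1

lemma fG_le_inv_sq (x t : ℝ) : ENNReal.ofReal (fG x t) ≤ (ENNReal.ofReal (t ^ 2))⁻¹ := by
  by_cases ht : t = 0
  · subst ht
    simp only [ne_eq, OfNat.ofNat_ne_zero, not_false_eq_true, zero_pow, ENNReal.ofReal_zero,
      ENNReal.inv_zero]
    exact le_top
  · have ht2 : (0 : ℝ) < t ^ 2 := by positivity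
    rw [← ENNReal.ofReal_inv_of_pos ht2]
    refine ENNReal.ofReal_le_ofReal ?_
    have h0 := qf_pos x
    have h1 : 0 < 1 + qf x * t ^ 2 := by nlinarith
    rw [fG, div_le_iff₀ h1]
    have h2 : (t ^ 2)⁻¹ * (t ^ 2) = 1 := inv_mul_cancel₀ ht2.ne'
    have h3 : 0 < (t ^ 2)⁻¹ := by positivity
    nlinarith

lemma Gl_anti (μ : Measure ℝ) : Antitone (Gl μ) := fun a b hab =>
  lintegral_mono fun t => ENNReal.ofReal_le_ofReal (frac_mono (qf_pos b).le (qf_anti hab))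

lemma Gl_ne_top (μ : Measure ℝ) [IsProbabilityMeasure μ] (x : ℝ) : Gl μ x ≠ ⊤ := by
  have h1 : Gl μ x ≤ ENNReal.ofReal (qf x) := by
    calc Gl μ x ≤ ∫⁻ _ : ℝ, ENNReal.ofReal (qf x) ∂μ :=
          lintegral_mono fun t => ENNReal.ofReal_le_ofReal (fG_le_qf x t)
      _ = ENNReal.ofReal (qf x) := by simp [lintegral_const, measure_univ]
  exact (lt_of_le_of_lt h1 ENNReal.ofReal_lt_top).ne

lemma Gl_seq (μ : Measure ℝ) [IsProbabilityMeasure μ] :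
    Tendsto (fun n : ℕ => Gl μ (-((n : ℝ) + 1))) atTop (𝓝 (invSqInt μ)) := by
  have hq : ∀ n : ℕ, qf (-((n : ℝ) + 1)) = (n : ℝ) + 1 := fun n => by
    rw [qf, neg_neg]
    exact max_eq_right (by have := Nat.cast_nonneg (α := ℝ) n; linarith)
  have hfg : ∀ (n : ℕ) (t : ℝ), fG (-((n : ℝ) + 1)) t
      = ((n : ℝ) + 1) / (1 + ((n : ℝ) + 1) * t ^ 2) := fun n t => by rw [fG, hq n]
  unfold Gl invSqInt
  refine lintegral_tendsto_of_tendsto_of_monotone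
    (fun n => ((fG_meas _).ennreal_ofReal).aemeasurable) ?_ ?_
  · refine ae_of_all _ fun t n m hnm => ?_
    refine ENNReal.ofReal_le_ofReal ?_
    rw [hfg n, hfg m]
    have hc : ((n : ℝ)) ≤ (m : ℝ) := Nat.cast_le.mpr hnm
    exact frac_mono (by have := Nat.cast_nonneg (α := ℝ) n; linarith) (by linarith)
  · refine ae_of_all _ fun t => ?_
    by_cases ht : t = 0
    · subst ht
      have hv : ∀ n : ℕ, fG (-((n : ℝ) + 1)) 0 = (n : ℝ) + 1 := fun n => by
        rw [hfg n]; norm_num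
      simp only [hv, ne_eq, OfNat.ofNat_ne_zero, not_false_eq_true, zero_pow,
        ENNReal.ofReal_zero, ENNReal.inv_zero]
      refine ENNReal.tendsto_ofReal_atTop.comp ?_
      exact tendsto_atTop_add_const_right atTop 1 tendsto_natCast_atTop_atTop
    · have ht2 : (0 : ℝ) < t ^ 2 := by positivity
      have heq : ∀ n : ℕ, fG (-((n : ℝ) + 1)) t = ((((n : ℝ) + 1))⁻¹ + t ^ 2)⁻¹ := fun n => by
        rw [hfg n]
        have hn : (0 : ℝ) < (n : ℝ) + 1 := by positivity
        rw [eq_comm, inv_eq_iff_eq_inv, eq_comm]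
        field_simp
      simp only [heq]
      rw [← ENNReal.ofReal_inv_of_pos ht2]
      refine (ENNReal.continuous_ofReal.tendsto _).comp ?_
      have h1 : Tendsto (fun n : ℕ => (((n : ℝ) + 1))⁻¹ + t ^ 2) atTop (𝓝 (0 + t ^ 2)) := by
        refine Tendsto.add_const _ ?_
        exact tendsto_inv_atTop_zero.comp
          (tendsto_atTop_add_const_right atTop 1 tendsto_natCast_atTop_atTop)
      rw [zero_add] at h1
      exact h1.inv₀ ht2.ne'

lemma Gl_tendsto (μ : Measure ℝ) [IsProbabilityMeasure μ] :
    Tendsto (Gl μ) atBot (𝓝 (invSqInt μ)) := by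
  have hsup : (⨆ x : ℝ, Gl μ x) = invSqInt μ := by
    refine le_antisymm (iSup_le fun x => lintegral_mono fun t => fG_le_inv_sq x t) ?_
    exact le_of_tendsto (Gl_seq μ) (Eventually.of_forall fun n => le_iSup (Gl μ) _)
  have := tendsto_atBot_iSup (Gl_anti μ)
  rwa [hsup] at this

lemma FR_eq (μ : Measure ℝ) [IsProbabilityMeasure μ] {x : ℝ} (hx : x ≤ -1) :
    FR μ x = -(Gl μ x).toReal := by
  have hqx : qf x = -x := max_eq_right (by linarith)
  have h1 : ∀ t : ℝ, x / (1 - x * t ^ 2) = -(fG x t) := fun t => by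
    rw [fG, hqx, show (1 : ℝ) + -x * t ^ 2 = 1 - x * t ^ 2 by ring, neg_div, neg_neg]
  rw [FR, integral_congr_ae (ae_of_all _ h1), integral_neg,
    integral_eq_lintegral_of_nonneg_ae (ae_of_all _ (fG_nonneg x))
      (fG_meas x).aestronglyMeasurable]
  rfl

lemma FR_tendsto_finite (μ : Measure ℝ) [IsProbabilityMeasure μ] (h : invSqInt μ ≠ ⊤) :
    Tendsto (FR μ) atBot (𝓝 (-(invSqInt μ).toReal)) := by
  have h1 : Tendsto (fun x => -(Gl μ x).toReal) atBot (𝓝 (-(invSqInt μ).toReal)) :=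
    ((ENNReal.tendsto_toReal h).comp (Gl_tendsto μ)).neg
  refine h1.congr' ?_
  filter_upwards [eventually_le_atBot (-1 : ℝ)] with x hx
  exact (FR_eq μ hx).symm

lemma FR_tendsto_top (μ : Measure ℝ) [IsProbabilityMeasure μ] (h : invSqInt μ = ⊤) :
    Tendsto (FR μ) atBot atBot := by
  rw [tendsto_atBot]
  intro b
  have hG := Gl_tendsto μ
  rw [h] at hG
  have hev : ∀ᶠ x : ℝ in atBot, ENNReal.ofReal (-b) < Gl μ x :=
    hG.eventually (eventually_gt_nhds ENNReal.ofReal_lt_top)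
  filter_upwards [hev, eventually_le_atBot (-1 : ℝ)] with x h1 h2
  have h3 := (ENNReal.ofReal_le_iff_le_toReal (Gl_ne_top μ x)).mp h1.le
  rw [FR_eq μ h2]
  linarith

lemma x_mul_one_add_Mt (μ : Measure ℝ) [IsProbabilityMeasure μ] {x : ℝ} (hx : x < 0) :
    (x : ℂ) * (1 + Mt μ (x : ℂ)) = ((FR μ x : ℝ) : ℂ) := by
  rw [Mt_eq μ hx]
  have hint := int_mRint μ hx.le
  have h1 : (1 : ℝ) + mR μ x = ∫ t : ℝ, (1 - x * t ^ 2)⁻¹ ∂μ := by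
    have h2 : ∫ t : ℝ, (((1 - x * t ^ 2)⁻¹ - 1) + 1) ∂μ
        = mR μ x + ∫ _ : ℝ, (1 : ℝ) ∂μ := integral_add hint (integrable_const 1)
    simp only [sub_add_cancel] at h2
    rw [h2, integral_const]
    simp [measure_univ]
    ring
  have key : x * (1 + mR μ x) = FR μ x := by
    rw [h1, ← integral_const_mul, FR]
    refine integral_congr_ae (ae_of_all _ fun t => ?_)
    dsimp only
    rw [div_eq_mul_inv]
  calc (x : ℂ) * (1 + ((mR μ x : ℝ) : ℂ)) = ((x * (1 + mR μ x) : ℝ) : ℂ) := by push_cast; ring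
    _ = ((FR μ x : ℝ) : ℂ) := by rw [key]

/-- For `λ ∈ (0,1)` and a symmetric probability measure `μ` on `ℝ`,
`H_μ(x) → -(1-λ)·∫ t⁻² dμ(t) ∈ [-∞,0)` as `x → -∞` (the limit being `-∞` when
`∫ t⁻² dμ(t) = +∞`, in particular when `μ({0}) > 0`), and
`H_μ(x)/x → λ·μ({0})² + (1-λ)·μ({0})`. -/
theorem stmt4 (l : ℝ) (hl : l ∈ Set.Ioo (0 : ℝ) 1) (μ : Measure ℝ) [IsProbabilityMeasure μ]
    (hsym : Measure.map (fun t : ℝ => -t) μ = μ) :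
    0 < invSqInt μ ∧
    (invSqInt μ ≠ ⊤ →
      Tendsto (fun x : ℝ => Ht l μ (x : ℂ)) atBot
        (nhds (-((1 : ℂ) - (l : ℂ)) * ((invSqInt μ).toReal : ℂ)))) ∧
    (invSqInt μ = ⊤ →
      (Tendsto (fun x : ℝ => (Ht l μ (x : ℂ)).re) atBot atBot ∧
        ∀ᶠ x : ℝ in atBot, (Ht l μ (x : ℂ)).im = 0)) ∧
    (0 < μ ({0} : Set ℝ) → invSqInt μ = ⊤) ∧
    Tendsto (fun x : ℝ => Ht l μ (x : ℂ) / (x : ℂ)) atBot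
      (nhds (((l * (μ ({0} : Set ℝ)).toReal ^ 2
        + (1 - l) * (μ ({0} : Set ℝ)).toReal : ℝ) : ℂ))) := by
  have Mtd := Mt_tendsto μ
  set μ0 : ℝ := (μ ({0} : Set ℝ)).toReal with hμ0def
  -- Part 1
  have hfmeas : Measurable (fun t : ℝ => (ENNReal.ofReal (t ^ 2))⁻¹) :=
    ((measurable_id.pow_const 2).ennreal_ofReal).inv
  have part1 : 0 < invSqInt μ := by
    rw [invSqInt, lintegral_pos_iff_support hfmeas]
    have hsupp : Function.support (fun t : ℝ => (ENNReal.ofReal (t ^ 2))⁻¹) = Set.univ := by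
      refine eq_univ_of_forall fun t => ?_
      simp only [Function.mem_support, ne_eq, ENNReal.inv_eq_zero]
      exact ENNReal.ofReal_lt_top.ne
    rw [hsupp, measure_univ]
    norm_num
  -- Part 4
  have part4 : 0 < μ ({0} : Set ℝ) → invSqInt μ = ⊤ := by
    intro h0
    refine top_le_iff.mp ?_
    have h1 : (∫⁻ t in ({0} : Set ℝ), (ENNReal.ofReal (t ^ 2))⁻¹ ∂μ) ≤ invSqInt μ :=
      setLIntegral_le_lintegral _ _
    rw [lintegral_singleton] at h1
    simp only [ne_eq, OfNat.ofNat_ne_zero, not_false_eq_true, zero_pow, ENNReal.ofReal_zero,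
      ENNReal.inv_zero] at h1
    rwa [ENNReal.top_mul h0.ne'] at h1
  -- second factor tendsto
  have hfac2 : Tendsto (fun x : ℝ => 1 + (l : ℂ) * Mt μ (x : ℂ)) atBot
      (𝓝 (1 + (l : ℂ) * ((μ0 - 1 : ℝ) : ℂ))) :=
    tendsto_const_nhds.add (tendsto_const_nhds.mul Mtd)
  -- Part 5
  have part5 : Tendsto (fun x : ℝ => Ht l μ (x : ℂ) / (x : ℂ)) atBot
      (𝓝 (((l * μ0 ^ 2 + (1 - l) * μ0 : ℝ) : ℂ))) := by
    have h2 : Tendsto (fun x : ℝ => (1 + Mt μ (x : ℂ)) * (1 + (l : ℂ) * Mt μ (x : ℂ))) atBot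
        (𝓝 ((1 + ((μ0 - 1 : ℝ) : ℂ)) * (1 + (l : ℂ) * ((μ0 - 1 : ℝ) : ℂ)))) :=
      (tendsto_const_nhds.add Mtd).mul hfac2
    have heq : ((l * μ0 ^ 2 + (1 - l) * μ0 : ℝ) : ℂ)
        = (1 + ((μ0 - 1 : ℝ) : ℂ)) * (1 + (l : ℂ) * ((μ0 - 1 : ℝ) : ℂ)) := by
      push_cast; ring
    rw [heq]
    refine h2.congr' ?_
    filter_upwards [eventually_lt_atBot (0 : ℝ)] with x hx
    have hx0 : (x : ℂ) ≠ 0 := Complex.ofReal_ne_zero.mpr hx.ne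
    rw [Ht]
    field_simp
  -- Part 2
  have part2 : invSqInt μ ≠ ⊤ →
      Tendsto (fun x : ℝ => Ht l μ (x : ℂ)) atBot
        (𝓝 (-((1 : ℂ) - (l : ℂ)) * ((invSqInt μ).toReal : ℂ))) := by
    intro h
    have hμz : μ ({0} : Set ℝ) = 0 := by
      by_contra h0
      exact h (part4 (pos_iff_ne_zero.mpr h0))
    have hμ0 : μ0 = 0 := by rw [hμ0def, hμz]; simp
    have hFc : Tendsto (fun x : ℝ => ((FR μ x : ℝ) : ℂ)) atBot
        (𝓝 (((-(invSqInt μ).toReal : ℝ) : ℂ))) :=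
      (Complex.continuous_ofReal.tendsto _).comp (FR_tendsto_finite μ h)
    have h2 : Tendsto (fun x : ℝ => ((FR μ x : ℝ) : ℂ) * (1 + (l : ℂ) * Mt μ (x : ℂ))) atBot
        (𝓝 (((-(invSqInt μ).toReal : ℝ) : ℂ) * (1 + (l : ℂ) * ((μ0 - 1 : ℝ) : ℂ)))) :=
      hFc.mul hfac2
    have heq : -((1 : ℂ) - (l : ℂ)) * ((invSqInt μ).toReal : ℂ)
        = ((-(invSqInt μ).toReal : ℝ) : ℂ) * (1 + (l : ℂ) * ((μ0 - 1 : ℝ) : ℂ)) := by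
      rw [hμ0]; push_cast; ring
    rw [heq]
    refine h2.congr' ?_
    filter_upwards [eventually_lt_atBot (0 : ℝ)] with x hx
    rw [← x_mul_one_add_Mt μ hx, Ht]
  -- Part 3
  have part3 : invSqInt μ = ⊤ →
      (Tendsto (fun x : ℝ => (Ht l μ (x : ℂ)).re) atBot atBot ∧
        ∀ᶠ x : ℝ in atBot, (Ht l μ (x : ℂ)).im = 0) := by
    intro h
    have hRe : ∀ᶠ x : ℝ in atBot, Ht l μ (x : ℂ)
        = ((FR μ x * (1 + l * mR μ x) : ℝ) : ℂ) := by
      filter_upwards [eventually_lt_atBot (0 : ℝ)] with x hx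
      rw [Ht, x_mul_one_add_Mt μ hx, Mt_eq μ hx]
      push_cast
      ring
    constructor
    · have hpos : 0 < 1 + l * (μ0 - 1) := by
        have h1 : 0 ≤ μ0 := ENNReal.toReal_nonneg
        nlinarith [hl.1, hl.2]
      have hg : Tendsto (fun x : ℝ => 1 + l * mR μ x) atBot (𝓝 (1 + l * (μ0 - 1))) :=
        tendsto_const_nhds.add ((mR_tendsto μ).const_mul l)
      have h2 : Tendsto (fun x : ℝ => FR μ x * (1 + l * mR μ x)) atBot atBot :=
        (FR_tendsto_top μ h).atBot_mul_pos hpos hg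
      refine h2.congr' ?_
      filter_upwards [hRe] with x hx
      rw [hx, Complex.ofReal_re]
    · filter_upwards [hRe] with x hx
      rw [hx, Complex.ofReal_im]
  exact ⟨part1, part2, part3, part4, part5⟩

end
end

section
/- Let μ be a Borel probability measure on ℝ that is not a Dirac mass, and let φ : ℂ⁺ → ℂ⁻ ∪ ℝ be analytic with z = F_μ(z) + φ(F_μ(z)) for all z ∈ ℂ⁺. Assume that the restriction of F_μ to ℂ⁺ extends continuously to ℝ with finite values, and that every nontangential limit of φ that exists at a point of ℝ belongs to ℂ⁻. Then the boundary value F_μ(x) belongs to ℂ⁺ for every x ∈ ℝ. -/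
open MeasureTheory Complex Set Filter Topology

noncomputable section

/-- The upper half-plane. -/
def UHP : Set ℂ := {z : ℂ | 0 < z.im}

/-- The Cauchy transform of a measure on `ℝ`. -/
def cauchyG (ν : Measure ℝ) (z : ℂ) : ℂ := ∫ t : ℝ, (z - (t : ℂ))⁻¹ ∂ν

/-- The reciprocal Cauchy transform. -/
def cauchyF (ν : Measure ℝ) (z : ℂ) : ℂ := (cauchyG ν z)⁻¹

/-- The Stolz angle at `x ∈ ℝ` with aperture parameter `α`. -/
def stolz (x α : ℝ) : Set ℂ := {z : ℂ | 0 < z.im ∧ |z.re - x| ≤ α * z.im}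

/-- `f` has nontangential limit `l` at the real point `x`. -/
def HasNTLimitAt (f : ℂ → ℂ) (x : ℝ) (l : ℂ) : Prop :=
  ∀ α > (0 : ℝ), Tendsto f (nhdsWithin (x : ℂ) (stolz x α)) (nhds l)

lemma uhp_open : IsOpen UHP := isOpen_lt continuous_const Complex.continuous_im

lemma K1 (z a : ℂ) : normSq (z - (starRingEnd ℂ) a) = normSq (z - a) + 4 * z.im * a.im := by
  simp [Complex.normSq_apply, Complex.sub_re, Complex.sub_im, Complex.conj_re, Complex.conj_im]
  ring

lemma sub_conj_ne (z a : ℂ) (hz : z ∈ UHP) (ha : a ∈ UHP) : z - (starRingEnd ℂ) a ≠ 0 := by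
  intro h
  have : (z - (starRingEnd ℂ) a).im = 0 := by rw [h]; simp
  simp [Complex.sub_im, Complex.conj_im] at this
  have h1 : 0 < z.im := hz
  have h2 : 0 < a.im := ha
  linarith

lemma K2 (z a : ℂ) (hz : z ∈ UHP) (ha : a ∈ UHP) :
    ‖z - a‖ < ‖z - (starRingEnd ℂ) a‖ := by
  have h1 : 0 < z.im := hz
  have h2 : 0 < a.im := ha
  have := K1 z a
  have hlt : normSq (z - a) < normSq (z - (starRingEnd ℂ) a) := by nlinarith
  rw [Complex.norm_def, Complex.norm_def]
  exact Real.sqrt_lt_sqrt (normSq_nonneg _) hlt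

-- inverse Cayley: for |ζ|<1, (q - ζ * conj q)/(1 - ζ) ∈ UHP
lemma tinv_mem (q ζ : ℂ) (hq : q ∈ UHP) (hζ : ‖ζ‖ < 1) :
    (q - ζ * (starRingEnd ℂ) q) / (1 - ζ) ∈ UHP := by
  have hζ1 : (1 : ℂ) - ζ ≠ 0 := by
    intro h
    have : ζ = 1 := by linear_combination -h
    simp [this] at hζ
  set z := (q - ζ * (starRingEnd ℂ) q) / (1 - ζ) with hz
  have hqc : q - (starRingEnd ℂ) q ≠ 0 := by
    intro h
    have : (q - (starRingEnd ℂ) q).im = 0 := by rw [h]; simp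
    simp [Complex.sub_im, Complex.conj_im] at this
    have : 0 < q.im := hq
    linarith
  have e1 : z - (starRingEnd ℂ) q = (q - (starRingEnd ℂ) q) / (1 - ζ) := by
    rw [hz, div_sub' hζ1]
    ring_nf
  have e2 : z - q = ζ * (q - (starRingEnd ℂ) q) / (1 - ζ) := by
    rw [hz, div_sub' hζ1]
    ring_nf
  have h2 : 0 < q.im := hq
  have hns1 : normSq (z - (starRingEnd ℂ) q) = normSq (q - (starRingEnd ℂ) q) / normSq (1 - ζ) := by
    rw [e1, normSq_div]
  have hns2 : normSq (z - q) = normSq ζ * normSq (q - (starRingEnd ℂ) q) / normSq (1 - ζ) := by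
    rw [e2, normSq_div, normSq_mul]
  have hK := K1 z q
  have hpos : 0 < normSq (q - (starRingEnd ℂ) q) := normSq_pos.2 hqc
  have hpos2 : 0 < normSq (1 - ζ) := normSq_pos.2 hζ1
  have hζsq : normSq ζ < 1 := by
    have := Complex.sq_norm ζ
    nlinarith [norm_nonneg ζ]
  have : 0 < 4 * z.im * q.im := by
    have : normSq (z - q) < normSq (z - (starRingEnd ℂ) q) := by
      rw [hns1, hns2, div_lt_div_iff₀ hpos2 hpos2]
      nlinarith [mul_lt_mul_of_pos_right hζsq (mul_pos hpos hpos2)]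
    linarith [hK]
  show 0 < z.im
  nlinarith

lemma sp_strict (f : ℂ → ℂ) (hd : DifferentiableOn ℂ f UHP)
    (hm : ∀ w ∈ UHP, f w ∈ UHP) (p q : ℂ) (hp : p ∈ UHP) (hq : q ∈ UHP) :
    ‖f p - f q‖ * ‖p - (starRingEnd ℂ) q‖
      ≤ ‖p - q‖ * ‖f p - (starRingEnd ℂ) (f q)‖ := by
  have hqim : 0 < q.im := hq
  have hfq := hm q hq
  -- Cayley inverse map z(ζ)
  set Z : ℂ → ℂ := fun ζ => (q - ζ * (starRingEnd ℂ) q) / (1 - ζ) with hZ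
  have hZmem : ∀ ζ ∈ Metric.ball (0:ℂ) 1, Z ζ ∈ UHP := by
    intro ζ hζ
    exact tinv_mem q ζ hq (by simpa [] using Metric.mem_ball.1 hζ)
  have hZdiff : DifferentiableOn ℂ Z (Metric.ball (0:ℂ) 1) := by
    apply DifferentiableOn.div
    · fun_prop
    · fun_prop
    · intro ζ hζ h1
      have hζ' : ‖ζ‖ < 1 := by simpa [] using Metric.mem_ball.1 hζ
      have hζ1 : ζ = 1 := by linear_combination -h1
      rw [hζ1] at hζ'
      simp at hζ' 
  set h : ℂ → ℂ := fun ζ =>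
      (f (Z ζ) - f q) / (f (Z ζ) - (starRingEnd ℂ) (f q)) with hh
  have hZ0 : Z 0 = q := by simp [hZ]
  have h0 : h 0 = 0 := by simp [hh, hZ0, sub_self, zero_div]
  have hdenom : ∀ ζ ∈ Metric.ball (0:ℂ) 1, f (Z ζ) - (starRingEnd ℂ) (f q) ≠ 0 :=
    fun ζ hζ => sub_conj_ne _ _ (hm _ (hZmem ζ hζ)) hfq
  have hhdiff : DifferentiableOn ℂ h (Metric.ball (0:ℂ) 1) := by
    have hfZ : DifferentiableOn ℂ (fun ζ => f (Z ζ)) (Metric.ball (0:ℂ) 1) :=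
      hd.comp hZdiff hZmem
    exact (hfZ.sub (differentiableOn_const _)).div (hfZ.sub (differentiableOn_const _)) hdenom
  have hmaps : Set.MapsTo h (Metric.ball (0:ℂ) 1) (Metric.ball (h 0) 1) := by
    intro ζ hζ
    rw [h0, Metric.mem_ball, dist_zero_right]
    have h1 := K2 (f (Z ζ)) (f q) (hm _ (hZmem ζ hζ)) hfq
    have h2 : 0 < ‖f (Z ζ) - (starRingEnd ℂ) (f q)‖ :=
      (norm_pos_iff.mpr (hdenom ζ hζ))
    simp only [hh, norm_div]
    exact div_lt_one h2 |>.2 h1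
  -- the point ζp
  set ζp : ℂ := (p - q) / (p - (starRingEnd ℂ) q) with hζp
  have hpq : p - (starRingEnd ℂ) q ≠ 0 := sub_conj_ne p q hp hq
  have hζpmem : ζp ∈ Metric.ball (0:ℂ) 1 := by
    rw [Metric.mem_ball, dist_zero_right]
    have := K2 p q hp hq
    simp only [hζp, norm_div]
    exact div_lt_one (norm_pos_iff.mpr hpq) |>.2 this
  have hZp : Z ζp = p := by
    have hden : (1:ℂ) - ζp ≠ 0 := by
      have : (1:ℂ) - ζp = (q - (starRingEnd ℂ) q) / (p - (starRingEnd ℂ) q) := by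
        rw [hζp]; field_simp; ring
      rw [this]
      exact div_ne_zero (sub_conj_ne q q hq hq) hpq
    rw [hZ]
    simp only
    rw [div_eq_iff hden, hζp]
    field_simp
    ring
  have key := Complex.dist_le_div_mul_dist_of_mapsTo_ball hhdiff (hmaps.mono_right Metric.ball_subset_closedBall) hζpmem
  rw [h0, dist_zero_right, dist_zero_right] at key
  simp only [hh] at key
  rw [hZp] at key
  have key2 : ‖(f p - f q) / (f p - (starRingEnd ℂ) (f q))‖
      ≤ ‖(p - q) / (p - (starRingEnd ℂ) q)‖ := by
    simpa [hζp, one_div] using key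
  rw [norm_div, norm_div, div_le_div_iff₀ (norm_pos_iff.mpr (sub_conj_ne _ _ (hm p hp) hfq))
    (norm_pos_iff.mpr hpq)] at key2
  linarith [key2]

lemma sp (f : ℂ → ℂ) (hd : DifferentiableOn ℂ f UHP)
    (hm : ∀ w ∈ UHP, 0 ≤ (f w).im) (p q : ℂ) (hp : p ∈ UHP) (hq : q ∈ UHP) :
    ‖f p - f q‖ * ‖p - (starRingEnd ℂ) q‖
      ≤ ‖p - q‖ * ‖f p - (starRingEnd ℂ) (f q)‖ := by
  -- apply sp_strict to f + ε i and let ε → 0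
  have main : ∀ n : ℕ, ‖f p - f q‖ * ‖p - (starRingEnd ℂ) q‖
      ≤ ‖p - q‖ *
        ‖f p - (starRingEnd ℂ) (f q) + 2 * ((n+1:ℝ))⁻¹ * Complex.I‖ := by
    intro n
    set ε : ℝ := ((n+1:ℝ))⁻¹ with hε
    have hεpos : 0 < ε := by positivity
    set g : ℂ → ℂ := fun w => f w + (ε : ℂ) * Complex.I with hg
    have hgd : DifferentiableOn ℂ g UHP := hd.add (differentiableOn_const _)
    have hgm : ∀ w ∈ UHP, g w ∈ UHP := by
      intro w hw
      have := hm w hw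
      show 0 < (f w + (ε:ℂ) * Complex.I).im
      simp [Complex.add_im, Complex.mul_im]
      linarith
    have := sp_strict g hgd hgm p q hp hq
    have e1 : g p - g q = f p - f q := by simp [hg]
    have e2 : g p - (starRingEnd ℂ) (g q)
        = f p - (starRingEnd ℂ) (f q) + 2 * (ε:ℝ) * Complex.I := by
      simp [hg, map_add, map_mul, Complex.conj_I, Complex.conj_ofReal]
      ring
    rw [e1, e2] at this
    exact this
  have hlim : Tendsto (fun n : ℕ => ‖p - q‖ *
      ‖f p - (starRingEnd ℂ) (f q) + 2 * ((n+1:ℝ))⁻¹ * Complex.I‖) atTop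
      (𝓝 (‖p - q‖ * ‖f p - (starRingEnd ℂ) (f q)‖)) := by
    have h1 : Tendsto (fun n : ℕ => ((n+1:ℝ))⁻¹) atTop (𝓝 0) := by
      exact tendsto_one_div_add_atTop_nhds_zero_nat.congr (by intro n; rw [one_div])
    have h2 : Tendsto (fun n : ℕ => f p - (starRingEnd ℂ) (f q) + 2 * ((((n+1:ℝ))⁻¹ : ℝ) : ℂ) * Complex.I)
        atTop (𝓝 (f p - (starRingEnd ℂ) (f q))) := by
      have : Tendsto (fun n : ℕ => ((((n+1:ℝ))⁻¹ : ℝ) : ℂ)) atTop (𝓝 0) :=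
        (Complex.continuous_ofReal.tendsto 0).comp h1
      have h3 : Tendsto (fun n : ℕ => (2:ℂ) * ((((n+1:ℝ))⁻¹ : ℝ) : ℂ) * Complex.I) atTop (𝓝 0) := by
        simpa using (this.const_mul (2:ℂ)).mul_const Complex.I
      simpa using (tendsto_const_nhds (x := f p - (starRingEnd ℂ) (f q)) (f := atTop (α := ℕ))).add h3
    exact tendsto_const_nhds.mul ((continuous_norm.tendsto _).comp h2)
  exact ge_of_tendsto' hlim main

lemma julia (f : ℂ → ℂ) (hd : DifferentiableOn ℂ f UHP)
    (hm : ∀ w ∈ UHP, 0 ≤ (f w).im) (p q : ℂ) (hp : p ∈ UHP) (hq : q ∈ UHP) :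
    p.im * q.im * normSq (f p - (starRingEnd ℂ) (f q))
      ≤ (f p).im * (f q).im * normSq (p - (starRingEnd ℂ) q) := by
  have h := sp f hd hm p q hp hq
  have hsq : normSq (f p - f q) * normSq (p - (starRingEnd ℂ) q)
      ≤ normSq (p - q) * normSq (f p - (starRingEnd ℂ) (f q)) := by
    have h2 := mul_le_mul h h (by positivity) (by positivity)
    calc normSq (f p - f q) * normSq (p - (starRingEnd ℂ) q)
        = (‖f p - f q‖ * ‖p - (starRingEnd ℂ) q‖)
          * (‖f p - f q‖ * ‖p - (starRingEnd ℂ) q‖) := by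
          rw [← Complex.sq_norm, ← Complex.sq_norm]; ring
      _ ≤ (‖p - q‖ * ‖f p - (starRingEnd ℂ) (f q)‖)
          * (‖p - q‖ * ‖f p - (starRingEnd ℂ) (f q)‖) := h2
      _ = normSq (p - q) * normSq (f p - (starRingEnd ℂ) (f q)) := by
          rw [← Complex.sq_norm, ← Complex.sq_norm]; ring
  have k1 := K1 p q
  have k2 := K1 (f p) (f q)
  nlinarith [normSq_nonneg (f p - f q), normSq_nonneg (p - q),
    normSq_nonneg (p - (starRingEnd ℂ) q), normSq_nonneg (f p - (starRingEnd ℂ) (f q))]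


lemma sub_real_ne (z : ℂ) (hz : z ∈ UHP) (t : ℝ) : z - (t:ℂ) ≠ 0 := by
  intro h
  have : (z - (t:ℂ)).im = 0 := by rw [h]; simp
  simp [Complex.sub_im] at this
  have : 0 < z.im := hz
  linarith

lemma cauchyG_integrable (μ : Measure ℝ) [IsProbabilityMeasure μ] (z : ℂ) (hz : z ∈ UHP) :
    Integrable (fun t : ℝ => (z - (t:ℂ))⁻¹) μ := by
  have him : 0 < z.im := hz
  apply Integrable.mono' (integrable_const (z.im)⁻¹)
  · apply Continuous.aestronglyMeasurable
    exact (continuous_const.sub Complex.continuous_ofReal).inv₀ (fun t => sub_real_ne z hz t)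
  · refine Eventually.of_forall fun t => ?_
    rw [norm_inv]
    have h1 : z.im ≤ ‖z - (t:ℂ)‖ := by
      have := Complex.abs_im_le_norm (z - (t:ℂ))
      simp [Complex.sub_im] at this
      rw [abs_of_pos him] at this
      exact this
    have h2 : 0 < ‖z - (t:ℂ)‖ := norm_pos_iff.mpr (sub_real_ne z hz t)
    exact inv_anti₀ him h1

lemma cauchyG_im_neg (μ : Measure ℝ) [IsProbabilityMeasure μ] (z : ℂ) (hz : z ∈ UHP) :
    (cauchyG μ z).im < 0 := by
  have him : 0 < z.im := hz
  have hint := cauchyG_integrable μ z hz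
  have him_eq : (cauchyG μ z).im = ∫ t : ℝ, ((z - (t:ℂ))⁻¹).im ∂μ := by
    rw [cauchyG, ← RCLike.im_to_complex, ← integral_im hint]
    simp [RCLike.im_to_complex]
  rw [him_eq]
  have heq : ∀ t : ℝ, ((z - (t:ℂ))⁻¹).im = -(z.im / normSq (z - (t:ℂ))) := by
    intro t
    rw [Complex.inv_im]
    simp [Complex.sub_im, neg_div]
  rw [show (fun t : ℝ => ((z - (t:ℂ))⁻¹).im) = fun t : ℝ => -(z.im / normSq (z - (t:ℂ))) from
    funext heq] at *
  rw [integral_neg, neg_lt, neg_zero]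
  rw [integral_pos_iff_support_of_nonneg]
  · have : (Function.support fun t : ℝ => z.im / normSq (z - (t:ℂ))) = Set.univ := by
      ext t
      simp only [Function.mem_support, Set.mem_univ, iff_true]
      have := normSq_pos.2 (sub_real_ne z hz t)
      positivity
    rw [this]
    simp
  · intro t
    have := normSq_pos.2 (sub_real_ne z hz t)
    positivity
  · have h5 : Integrable (fun t : ℝ => -(z.im / normSq (z - (t:ℂ)))) μ :=
      hint.im.congr (Eventually.of_forall fun t => heq t)
    exact h5.neg.congr (Eventually.of_forall fun t => by simp [Pi.neg_apply])

lemma cauchyF_mem (μ : Measure ℝ) [IsProbabilityMeasure μ] (z : ℂ) (hz : z ∈ UHP) :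
    cauchyF μ z ∈ UHP := by
  have h1 := cauchyG_im_neg μ z hz
  have hne : cauchyG μ z ≠ 0 := by
    intro h; rw [h] at h1; simp at h1
  show 0 < (cauchyF μ z).im
  rw [cauchyF, Complex.inv_im]
  have := normSq_pos.2 hne
  have : 0 < -(cauchyG μ z).im := by linarith
  positivity




/-- Let `μ` be a probability measure on `ℝ`, not a Dirac mass, and
`φ : ℂ⁺ → ℂ⁻ ∪ ℝ` analytic with `z = F_μ(z) + φ(F_μ(z))` on `ℂ⁺`. If `F_μ|ℂ⁺` extends
continuously to `ℝ` with finite values and every existing nontangential limit of `φ` at a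
real point lies in `ℂ⁻`, then the boundary values of `F_μ` on `ℝ` lie in `ℂ⁺`. -/
theorem stmt5 (μ : Measure ℝ) [IsProbabilityMeasure μ]
    (hnd : ∀ a : ℝ, μ ≠ Measure.dirac a)
    (φ : ℂ → ℂ) (hφa : AnalyticOnNhd ℂ φ UHP) (hφm : ∀ z ∈ UHP, (φ z).im ≤ 0)
    (heq : ∀ z ∈ UHP, z = cauchyF μ z + φ (cauchyF μ z))
    (Fext : ℂ → ℂ)
    (hFc : ContinuousOn Fext (UHP ∪ ((fun x : ℝ => (x : ℂ)) '' Set.univ)))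
    (hFeq : ∀ z ∈ UHP, Fext z = cauchyF μ z)
    (hNT : ∀ x : ℝ, ∀ lim : ℂ, HasNTLimitAt φ x lim → lim.im < 0) :
    ∀ x : ℝ, 0 < (Fext (x : ℂ)).im := by
  intro x
  by_contra h0
  push_neg at h0
  set c : ℂ := Fext (x : ℂ) with hc
  -- the vertical sequence
  set zseq : ℕ → ℂ := fun n => (x : ℂ) + (((n+1:ℝ))⁻¹ : ℝ) * Complex.I with hzseq
  have hzim : ∀ n, (zseq n).im = ((n+1:ℝ))⁻¹ := by
    intro n
    simp only [hzseq, Complex.add_im, Complex.ofReal_im, Complex.mul_im, Complex.ofReal_re,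
      Complex.I_im, Complex.I_re]
    ring
  have hzmem : ∀ n, zseq n ∈ UHP := by
    intro n; show 0 < (zseq n).im; rw [hzim]; positivity
  set w : ℕ → ℂ := fun n => cauchyF μ (zseq n) with hwdef
  have hwmem : ∀ n, w n ∈ UHP := fun n => cauchyF_mem μ _ (hzmem n)
  have hεlim : Tendsto (fun n : ℕ => ((n+1:ℝ))⁻¹) atTop (𝓝 0) :=
    tendsto_one_div_add_atTop_nhds_zero_nat.congr (by intro n; rw [one_div])
  have hzx : Tendsto zseq atTop (𝓝 (x:ℂ)) := by
    have h1 : Tendsto (fun n : ℕ => ((((n+1:ℝ))⁻¹ : ℝ) : ℂ)) atTop (𝓝 0) :=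
      (Complex.continuous_ofReal.tendsto 0).comp hεlim
    have := (tendsto_const_nhds (x := (x:ℂ)) (f := atTop (α := ℕ))).add
      (h1.mul_const Complex.I)
    simpa [hzseq] using this
  have hwc : Tendsto w atTop (𝓝 c) := by
    have hmemx : (x:ℂ) ∈ UHP ∪ ((fun x : ℝ => (x : ℂ)) '' Set.univ) :=
      Set.mem_union_right _ ⟨x, Set.mem_univ x, rfl⟩
    have hcw := hFc _ hmemx
    have h2 : Tendsto zseq atTop (𝓝[UHP ∪ ((fun x : ℝ => (x : ℂ)) '' Set.univ)] (x:ℂ)) :=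
      tendsto_nhdsWithin_iff.2 ⟨hzx, Eventually.of_forall fun n => Or.inl (hzmem n)⟩
    have h3 := hcw.tendsto.comp h2
    exact h3.congr fun n => hFeq _ (hzmem n)
  have hcim0 : c.im = 0 := by
    have h1 : Tendsto (fun n => (w n).im) atTop (𝓝 c.im) :=
      (Complex.continuous_im.tendsto c).comp hwc
    have h2 : 0 ≤ c.im := ge_of_tendsto' h1 (fun n => (hwmem n).le)
    linarith
  -- the function f = -φ
  set f : ℂ → ℂ := fun ζ => -φ ζ with hf
  have hfd : DifferentiableOn ℂ f UHP := hφa.differentiableOn.neg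
  have hfm : ∀ ζ ∈ UHP, 0 ≤ (f ζ).im := by
    intro ζ hζ
    have := hφm ζ hζ
    simp only [hf, Complex.neg_im]
    linarith
  -- the functional equation along the sequence
  have hfw : ∀ n, f (w n) = w n - zseq n := by
    intro n
    have h1 := heq (zseq n) (hzmem n)
    simp only [hf]
    have hwn : w n = cauchyF μ (zseq n) := rfl
    rw [hwn]
    linear_combination h1
  set L : ℂ := c - (x:ℂ) with hL
  have hLim : L.im = 0 := by simp [hL, hcim0]
  have hconjL : (starRingEnd ℂ) L = L := Complex.conj_eq_iff_im.2 hLim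
  have hconjc : (starRingEnd ℂ) c = c := Complex.conj_eq_iff_im.2 hcim0
  have hfwL : Tendsto (fun n => f (w n)) atTop (𝓝 L) := by
    have := hwc.sub hzx
    rw [← hL] at this
    exact this.congr fun n => (hfw n).symm
  -- key inequality
  have KEY : ∀ p ∈ UHP, p.im * normSq (f p - L) ≤ (f p).im * normSq (p - c) := by
    intro p hp
    have hn : ∀ n, p.im * normSq (f p - (starRingEnd ℂ) (f (w n)))
        ≤ (f p).im * normSq (p - (starRingEnd ℂ) (w n)) := by
      intro n
      have hj := julia f hfd hfm p (w n) hp (hwmem n)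
      have h1 : (f (w n)).im ≤ (w n).im := by
        rw [hfw n]
        simp only [Complex.sub_im]
        have := hzmem n
        have : 0 < (zseq n).im := this
        linarith
      have h2 : 0 < (w n).im := hwmem n
      have h3 : 0 ≤ (f (w n)).im := hfm _ (hwmem n)
      have h4 : 0 ≤ (f p).im := hfm _ hp
      have h5 : 0 < p.im := hp
      nlinarith [normSq_nonneg (f p - (starRingEnd ℂ) (f (w n))),
        normSq_nonneg (p - (starRingEnd ℂ) (w n)),
        mul_le_mul_of_nonneg_left h1 (mul_nonneg h4 (normSq_nonneg (p - (starRingEnd ℂ) (w n))))]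
    have hA : Tendsto (fun n => p.im * normSq (f p - (starRingEnd ℂ) (f (w n)))) atTop
        (𝓝 (p.im * normSq (f p - L))) := by
      have hcont : Continuous fun u : ℂ => p.im * normSq (f p - (starRingEnd ℂ) u) :=
        continuous_const.mul (Complex.continuous_normSq.comp
          (continuous_const.sub Complex.continuous_conj))
      have := (hcont.tendsto L).comp hfwL
      simpa [hconjL, Function.comp_def] using this
    have hB : Tendsto (fun n => (f p).im * normSq (p - (starRingEnd ℂ) (w n))) atTop
        (𝓝 ((f p).im * normSq (p - c))) := by
      have hcont : Continuous fun u : ℂ => (f p).im * normSq (p - (starRingEnd ℂ) u) :=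
        continuous_const.mul (Complex.continuous_normSq.comp
          (continuous_const.sub Complex.continuous_conj))
      have := (hcont.tendsto c).comp hwc
      simpa [hconjc, Function.comp_def] using this
    exact le_of_tendsto_of_tendsto hA hB (Eventually.of_forall hn)
  -- nontangential limit of φ at c.re
  have hcre : ((c.re : ℝ) : ℂ) = c := Complex.ext rfl (by simp [hcim0])
  have hNTφ : HasNTLimitAt φ c.re (-L) := by
    intro α hα
    rw [hcre]
    have hbound : ∀ p ∈ stolz c.re α, ‖f p - L‖ ≤ (α^2+1) * p.im := by
      intro p hp
      obtain ⟨hp1, hp2⟩ := hp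
      have hpU : p ∈ UHP := hp1
      have hk := KEY p hpU
      have hns : normSq (p - c) ≤ (α^2+1) * p.im^2 := by
        rw [Complex.normSq_apply]
        simp only [Complex.sub_re, Complex.sub_im, hcim0, sub_zero]
        have habs := mul_self_le_mul_self (abs_nonneg (p.re - c.re)) hp2
        rw [abs_mul_abs_self] at habs
        nlinarith
      have him : (f p).im ≤ ‖f p - L‖ := by
        have he : (f p - L).im = (f p).im := by simp [hLim]
        calc (f p).im = (f p - L).im := he.symm
          _ ≤ |(f p - L).im| := le_abs_self _
          _ ≤ ‖f p - L‖ := Complex.abs_im_le_norm _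
      have hr2 : normSq (f p - L) = ‖f p - L‖^2 := (Complex.sq_norm _).symm
      rcases eq_or_lt_of_le (norm_nonneg (f p - L)) with h|h
      · rw [← h]
        positivity
      · have h4 : 0 ≤ (f p).im := hfm _ hpU
        have hstep : p.im * ‖f p - L‖^2
            ≤ ‖f p - L‖ * ((α^2+1) * p.im^2) := by
          rw [← hr2]
          exact hk.trans (mul_le_mul him hns (normSq_nonneg (p - c))
            (norm_nonneg (f p - L)))
        nlinarith [hstep, mul_pos hp1 h]
    have htendf : Tendsto f (𝓝[stolz c.re α] c) (𝓝 L) := by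
      rw [tendsto_iff_dist_tendsto_zero]
      refine squeeze_zero' (g := fun p : ℂ => (α^2+1) * p.im) ?_ ?_ ?_
      · exact Eventually.of_forall fun p => dist_nonneg
      · refine eventually_nhdsWithin_of_forall fun p hp => ?_
        rw [Complex.dist_eq]
        exact hbound p hp
      · have hcont : Tendsto (fun p : ℂ => (α^2+1) * p.im) (𝓝 c) (𝓝 ((α^2+1) * c.im)) :=
          (continuous_const.mul Complex.continuous_im).tendsto c
        have := tendsto_nhdsWithin_of_tendsto_nhds (s := stolz c.re α) hcont
        simpa [hcim0] using this
    have : Tendsto (fun p => -(f p)) (𝓝[stolz c.re α] c) (𝓝 (-L)) := htendf.neg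
    exact this.congr fun p => by simp [hf]
  have hfinal := hNT c.re (-L) hNTφ
  rw [Complex.neg_im, hLim] at hfinal
  exact lt_irrefl 0 (by linarith)

end
end

section
/- Let φ(z) = ∫ 1/(z−t) dσ(t) be the Cauchy transform of a nonzero positive finite Borel measure σ on ℝ, and let ν be a Borel probability measure on ℝ with Nevanlinna representation F_ν(z) = a + z + ∫ (1 + t·z)/(t − z) dρ(t) for z ∈ ℂ⁺, where a ∈ ℝ and ρ is a positive finite Borel measure on ℝ. If ρ({0}) ≥ σ(ℝ), then lim_{y→+∞} F_ν(−φ(iy))/(iy) = ρ({0})/σ(ℝ) ≥ 1; in particular, the analytic self-map g of ℂ⁺ defined by g(z) = F_ν(−φ(z)) has ∞ as its Denjoy–Wolff point. -/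
open MeasureTheory Complex Set Filter Topology

noncomputable section

lemma sub_ne_zero_of_im {z : ℂ} (hz : 0 < z.im) (t : ℝ) : (t : ℂ) - z ≠ 0 := by
  intro h
  have : ((t:ℂ) - z).im = 0 := by rw [h]; simp
  simp [Complex.sub_im] at this
  linarith

lemma norm_inv_sub_le {z : ℂ} (hz : 0 < z.im) (t : ℝ) :
    ‖((t : ℂ) - z)⁻¹‖ ≤ z.im⁻¹ := by
  rw [norm_inv]
  apply inv_anti₀ hz
  calc z.im = |((t:ℂ) - z).im| := by
        simp only [Complex.sub_im, Complex.ofReal_im, zero_sub, abs_neg]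
        exact (_root_.abs_of_nonneg hz.le).symm
  _ ≤ ‖(t:ℂ) - z‖ := Complex.abs_im_le_norm _

lemma meas_inv_sub {z : ℂ} (hz : 0 < z.im) (μ : Measure ℝ) :
    AEStronglyMeasurable (fun t : ℝ => ((t : ℂ) - z)⁻¹) μ := by
  apply Continuous.aestronglyMeasurable
  exact ((Complex.continuous_ofReal.sub continuous_const).inv₀ (sub_ne_zero_of_im hz))

lemma integrable_inv_sub {z : ℂ} (hz : 0 < z.im) (μ : Measure ℝ) [IsFiniteMeasure μ] :
    Integrable (fun t : ℝ => ((t : ℂ) - z)⁻¹) μ := by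
  refine Integrable.mono' (integrable_const z.im⁻¹) (meas_inv_sub hz μ) ?_
  exact Eventually.of_forall (norm_inv_sub_le hz)

lemma inv_sub_im {z : ℂ} (t : ℝ) :
    (((t : ℂ) - z)⁻¹).im = z.im * (Complex.normSq ((t:ℂ) - z))⁻¹ := by
  rw [Complex.inv_im]
  simp [Complex.sub_im, div_eq_mul_inv]

lemma normSq_inv_le {z : ℂ} (hz : 0 < z.im) (t : ℝ) :
    (Complex.normSq ((t:ℂ) - z))⁻¹ ≤ (z.im ^ 2)⁻¹ := by
  apply inv_anti₀ (by positivity)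
  calc z.im ^ 2 = (((t:ℂ) - z).im) ^ 2 := by simp only [Complex.sub_im, Complex.ofReal_im, zero_sub]; ring
  _ ≤ _ := by rw [Complex.normSq_apply]; nlinarith [sq_nonneg (((t:ℂ)-z).re)]

lemma integrable_normSq_inv {z : ℂ} (hz : 0 < z.im) (μ : Measure ℝ) [IsFiniteMeasure μ] :
    Integrable (fun t : ℝ => (Complex.normSq ((t:ℂ) - z))⁻¹) μ := by
  refine Integrable.mono' (integrable_const ((z.im ^ 2)⁻¹)) ?_ ?_
  · apply Continuous.aestronglyMeasurable
    apply Continuous.inv₀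
    · exact Complex.continuous_normSq.comp (Complex.continuous_ofReal.sub continuous_const)
    · intro t
      simpa [Complex.normSq_eq_zero] using sub_ne_zero_of_im hz t
  · refine Eventually.of_forall fun t => ?_
    rw [Real.norm_eq_abs, _root_.abs_of_nonneg (inv_nonneg.mpr (Complex.normSq_nonneg _))]
    exact normSq_inv_le hz t

lemma neg_cauchyG (μ : Measure ℝ) (z : ℂ) :
    -(cauchyG μ z) = ∫ t : ℝ, ((t : ℂ) - z)⁻¹ ∂μ := by
  rw [cauchyG, ← integral_neg]
  congr 1; funext t
  rw [← inv_neg, neg_sub]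

lemma im_int_inv_sub {z : ℂ} (hz : 0 < z.im) (μ : Measure ℝ) [IsFiniteMeasure μ] :
    (∫ t : ℝ, ((t : ℂ) - z)⁻¹ ∂μ).im
      = z.im * ∫ t : ℝ, (Complex.normSq ((t:ℂ) - z))⁻¹ ∂μ := by
  have h := integral_im (μ := μ) (𝕜 := ℂ) (integrable_inv_sub hz μ)
  simp only [RCLike.im_to_complex] at h
  rw [← h]
  rw [← integral_const_mul]
  congr 1; funext t; exact inv_sub_im t

section
variable {μ : Measure ℝ} [IsFiniteMeasure μ]

lemma q_pos {z : ℂ} (hz : 0 < z.im) (hμ : μ ≠ 0)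
    (hint : Integrable (fun t : ℝ => (Complex.normSq ((t:ℂ) - z))⁻¹) μ) :
    0 < ∫ t : ℝ, (Complex.normSq ((t:ℂ) - z))⁻¹ ∂μ := by
  rw [integral_pos_iff_support_of_nonneg
    (fun t => inv_nonneg.mpr (Complex.normSq_nonneg _)) hint]
  have : (Function.support fun t : ℝ => (Complex.normSq ((t:ℂ) - z))⁻¹) = Set.univ := by
    ext t
    simp only [Function.mem_support, Set.mem_univ, iff_true]
    intro h
    rw [inv_eq_zero, Complex.normSq_eq_zero] at h
    exact (by intro hh; have := congrArg Complex.im hh; simp at this; linarith : (t:ℂ) - z ≠ 0) h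
  rw [this]
  simpa [Measure.measure_univ_eq_zero, pos_iff_ne_zero] using hμ

lemma cs_real {h : ℝ → ℝ} (h1 : Integrable h μ) (h2 : Integrable (fun t => h t ^ 2) μ) :
    (∫ t, h t ∂μ) ^ 2 ≤ (μ Set.univ).toReal * ∫ t, h t ^ 2 ∂μ := by
  set S := (μ Set.univ).toReal with hS
  have hS0 : 0 ≤ S := ENNReal.toReal_nonneg
  set A := ∫ t, h t ∂μ with hA
  set E := ∫ t, h t ^ 2 ∂μ with hE
  have key : 0 ≤ ∫ t, (S * h t - A) ^ 2 ∂μ :=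
    integral_nonneg fun t => sq_nonneg _
  have expand : ∫ t, (S * h t - A) ^ 2 ∂μ = S^2 * E - 2 * S * A * A + A^2 * S := by
    have heq : (fun t => (S * h t - A) ^ 2)
        = fun t => (S^2 * (h t ^ 2) - 2 * S * A * (h t)) + A^2 := by
      funext t; ring
    have I1 : Integrable (fun t => S^2 * (h t ^ 2) - 2 * S * A * (h t)) μ :=
      (h2.const_mul _).sub (h1.const_mul _)
    calc ∫ t, (S * h t - A) ^ 2 ∂μ
        = ∫ t, ((S^2 * (h t ^ 2) - 2 * S * A * (h t)) + A^2) ∂μ := by rw [heq]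
      _ = (∫ t, (S^2 * (h t ^ 2) - 2 * S * A * (h t)) ∂μ) + ∫ _t, A^2 ∂μ :=
          integral_add I1 (integrable_const _)
      _ = ((∫ t, S^2 * (h t ^ 2) ∂μ) - ∫ t, 2 * S * A * (h t) ∂μ) + ∫ _t, A^2 ∂μ := by
          rw [integral_sub (h2.const_mul _) (h1.const_mul _)]
      _ = S^2 * E - 2 * S * A * A + A^2 * S := by
          rw [integral_const_mul, integral_const_mul, integral_const]
          simp only [smul_eq_mul, measureReal_def, ← hS, ← hA, ← hE]
          ring
  rw [expand] at key
  rcases eq_or_lt_of_le hS0 with hS0' | hS0'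
  · have hμ0 : μ Set.univ = 0 := by
      have h2' : (μ Set.univ).toReal = 0 := by rw [← hS]; exact hS0'.symm
      rcases (ENNReal.toReal_eq_zero_iff _).mp h2' with hh | hh
      · exact hh
      · exact absurd hh (measure_ne_top μ _)
    have hz : μ = 0 := Measure.measure_univ_eq_zero.mp hμ0
    subst hz
    simp [hA, hE]
  · nlinarith [key]

end

lemma frac_eq {z : ℂ} (hz : 0 < z.im) (t : ℝ) :
    (1 + (t:ℂ) * z) / ((t:ℂ) - z) = z + (1 + z^2) * ((t:ℂ) - z)⁻¹ := by
  field_simp [sub_ne_zero_of_im hz t]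
  ring

lemma frac_im {z : ℂ} (t : ℝ) :
    ((1 + (t:ℂ) * z) / ((t:ℂ) - z)).im
      = z.im * (1 + t^2) / Complex.normSq ((t:ℂ) - z) := by
  rw [Complex.div_im]
  simp only [Complex.add_im, Complex.one_im, Complex.mul_im, Complex.ofReal_re,
    Complex.ofReal_im, Complex.sub_re, Complex.sub_im, Complex.add_re, Complex.one_re,
    Complex.mul_re]
  ring

lemma frac_zero_im {z : ℂ} (hz : 0 < z.im) :
    ((1 + (0:ℝ) * z) / (((0:ℝ):ℂ) - z)).im = z.im / Complex.normSq z := by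
  have h := frac_im (z := z) 0
  rw [h]
  simp [Complex.normSq_neg]

lemma setIntegral_singleton_real {f : ℝ → ℝ} (hf : StronglyMeasurable f) (ρ : Measure ℝ) :
    ∫ t in ({0} : Set ℝ), f t ∂ρ = (ρ ({0} : Set ℝ)).toReal * f 0 := by
  rw [Measure.restrict_singleton, integral_smul_measure, integral_dirac' f 0 hf]
  simp [ENNReal.toReal, smul_eq_mul]

section
variable {ν : Measure ℝ} {ρ : Measure ℝ} [IsFiniteMeasure ρ] {a : ℝ}

lemma integrable_frac {z : ℂ} (hz : 0 < z.im) (ρ : Measure ℝ) [IsFiniteMeasure ρ] :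
    Integrable (fun t : ℝ => (1 + (t:ℂ) * z) / ((t:ℂ) - z)) ρ := by
  have : (fun t : ℝ => (1 + (t:ℂ) * z) / ((t:ℂ) - z))
      = fun t : ℝ => z + (1 + z^2) * ((t:ℂ) - z)⁻¹ := funext fun t => frac_eq hz t
  rw [this]
  exact (integrable_const z).add ((integrable_inv_sub hz ρ).const_mul _)

lemma imF_ge (hrep : ∀ z ∈ UHP, cauchyF ν z =
      (a : ℂ) + z + ∫ t : ℝ, (1 + (t : ℂ) * z) / ((t : ℂ) - z) ∂ρ)
    {w : ℂ} (hw : 0 < w.im) :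
    w.im + (ρ ({0} : Set ℝ)).toReal * (w.im / Complex.normSq w) ≤ (cauchyF ν w).im := by
  rw [hrep w hw]
  have hint := integrable_frac hw ρ
  have him : (∫ t : ℝ, (1 + (t:ℂ) * w) / ((t:ℂ) - w) ∂ρ).im
      = ∫ t : ℝ, ((1 + (t:ℂ) * w) / ((t:ℂ) - w)).im ∂ρ := by
    have h := integral_im (μ := ρ) (𝕜 := ℂ) hint
    simp only [RCLike.im_to_complex] at h
    exact h.symm
  simp only [Complex.add_im, Complex.ofReal_im, zero_add, him]
  have hnn : 0 ≤ᵐ[ρ] fun t : ℝ => ((1 + (t:ℂ) * w) / ((t:ℂ) - w)).im := by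
    refine Eventually.of_forall fun t => ?_
    show (0:ℝ) ≤ ((1 + (t:ℂ) * w) / ((t:ℂ) - w)).im
    rw [frac_im]
    exact div_nonneg (by nlinarith [sq_nonneg t, hw.le]) (Complex.normSq_nonneg _)
  have hmeas : StronglyMeasurable fun t : ℝ => ((1 + (t:ℂ) * w) / ((t:ℂ) - w)).im := by
    apply Continuous.stronglyMeasurable
    apply Complex.continuous_im.comp
    apply Continuous.div
    · exact continuous_const.add (Complex.continuous_ofReal.mul continuous_const)
    · exact Complex.continuous_ofReal.sub continuous_const
    · exact sub_ne_zero_of_im hw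
  have hset := setIntegral_le_integral (s := ({0} : Set ℝ)) hint.im hnn
  simp only [RCLike.im_to_complex] at hset
  rw [setIntegral_singleton_real hmeas ρ] at hset
  have h0 : ((1 + ((0:ℝ):ℂ) * w) / (((0:ℝ):ℂ) - w)).im = w.im / Complex.normSq w :=
    frac_zero_im hw
  rw [h0] at hset
  linarith

end

section
variable {σ : Measure ℝ} [IsFiniteMeasure σ]

lemma normSq_int_le {z : ℂ} (hz : 0 < z.im) (σ : Measure ℝ) [IsFiniteMeasure σ] :
    Complex.normSq (∫ t : ℝ, ((t:ℂ) - z)⁻¹ ∂σ)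
      ≤ (σ Set.univ).toReal * ∫ t : ℝ, (Complex.normSq ((t:ℂ) - z))⁻¹ ∂σ := by
  have hnorm : Integrable (fun t : ℝ => ‖((t:ℂ) - z)⁻¹‖) σ := (integrable_inv_sub hz σ).norm
  have hsq : (fun t : ℝ => ‖((t:ℂ) - z)⁻¹‖ ^ 2)
      = fun t : ℝ => (Complex.normSq ((t:ℂ) - z))⁻¹ := by
    funext t
    simp [Complex.normSq_eq_norm_sq, inv_pow]
  have hcs := cs_real hnorm (by rw [hsq]; exact integrable_normSq_inv hz σ)
  rw [hsq] at hcs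
  calc Complex.normSq (∫ t : ℝ, ((t:ℂ) - z)⁻¹ ∂σ)
      = ‖∫ t : ℝ, ((t:ℂ) - z)⁻¹ ∂σ‖ ^ 2 := by
        simp [Complex.normSq_eq_norm_sq]
    _ ≤ (∫ t : ℝ, ‖((t:ℂ) - z)⁻¹‖ ∂σ) ^ 2 := by
        apply pow_le_pow_left₀ (norm_nonneg _)
        exact norm_integral_le_integral_norm _
    _ ≤ _ := hcs

lemma sigma_icc (hσ : σ ≠ 0) : ∃ R : ℝ, 0 < R ∧ 0 < (σ (Icc (-R) R)).toReal := by
  by_contra hcon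
  push_neg at hcon
  have hzero : ∀ n : ℕ, σ (Icc (-(n:ℝ)-1) ((n:ℝ)+1)) = 0 := by
    intro n
    have h := hcon ((n:ℝ)+1) (by positivity)
    have hle : (σ (Icc (-((n:ℝ)+1)) ((n:ℝ)+1))).toReal ≤ 0 := h
    have := ENNReal.toReal_nonneg (a := σ (Icc (-((n:ℝ)+1)) ((n:ℝ)+1)))
    have h0 : (σ (Icc (-((n:ℝ)+1)) ((n:ℝ)+1))).toReal = 0 := le_antisymm hle this
    have hne := measure_ne_top σ (Icc (-((n:ℝ)+1)) ((n:ℝ)+1))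
    have := (ENNReal.toReal_eq_zero_iff _).mp h0
    rcases this with h' | h'
    · convert h' using 3 <;> ring
    · exact absurd h' hne
  apply hσ
  rw [← Measure.measure_univ_eq_zero]
  have huniv : (Set.univ : Set ℝ) = ⋃ n : ℕ, Icc (-(n:ℝ)-1) ((n:ℝ)+1) := by
    ext x
    simp only [mem_univ, mem_iUnion, mem_Icc, true_iff]
    obtain ⟨n, hn⟩ := exists_nat_ge |x|
    exact ⟨n, by cases abs_le.mp hn with | intro h1 h2 => constructor <;> linarith⟩
  rw [huniv]
  exact measure_iUnion_null hzero

lemma q_lower {z : ℂ} (hz : 0 < z.im) (R : ℝ) (hR : 0 < R) :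
    (σ (Icc (-R) R)).toReal * ((‖z‖ + R)^2)⁻¹
      ≤ ∫ t : ℝ, (Complex.normSq ((t:ℂ) - z))⁻¹ ∂σ := by
  have habs : 0 < ‖z‖ + R := by
    have := norm_nonneg z; linarith
  have hconst : ∀ t ∈ Icc (-R) R,
      ((‖z‖ + R)^2)⁻¹ ≤ (Complex.normSq ((t:ℂ) - z))⁻¹ := by
    intro t ht
    apply inv_anti₀
    · have hne : (t:ℂ) - z ≠ 0 := sub_ne_zero_of_im hz t
      simpa [Complex.normSq_pos] using hne
    · rw [← Complex.sq_norm]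
      apply pow_le_pow_left₀ (norm_nonneg _)
      calc ‖(t:ℂ) - z‖ ≤ ‖(t:ℂ)‖ + ‖z‖ := by
            simpa [sub_eq_add_neg] using norm_add_le (t:ℂ) (-z)
        _ ≤ R + ‖z‖ := by
            rw [Complex.norm_real, Real.norm_eq_abs]
            have : |t| ≤ R := abs_le.mpr ⟨ht.1, ht.2⟩
            linarith
        _ = ‖z‖ + R := by ring
  have h1 : ((‖z‖ + R)^2)⁻¹ * (σ (Icc (-R) R)).toReal
      ≤ ∫ t in Icc (-R) R, (Complex.normSq ((t:ℂ) - z))⁻¹ ∂σ :=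
    by have := setIntegral_ge_of_const_le measurableSet_Icc (measure_ne_top σ _) hconst
         ((integrable_normSq_inv hz σ).integrableOn)
       rw [smul_eq_mul, measureReal_def, mul_comm] at this; exact this
  have h2 : ∫ t in Icc (-R) R, (Complex.normSq ((t:ℂ) - z))⁻¹ ∂σ
      ≤ ∫ t : ℝ, (Complex.normSq ((t:ℂ) - z))⁻¹ ∂σ :=
    setIntegral_le_integral (integrable_normSq_inv hz σ)
      (Eventually.of_forall fun t => inv_nonneg.mpr (Complex.normSq_nonneg _))
  linarith [h1, h2]

end

section
variable {σ ν ρ : Measure ℝ} [IsFiniteMeasure σ] [IsProbabilityMeasure ν] [IsFiniteMeasure ρ] {a : ℝ}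

lemma step_bound (hσ : σ ≠ 0)
    (hrep : ∀ z ∈ UHP, cauchyF ν z =
      (a : ℂ) + z + ∫ t : ℝ, (1 + (t : ℂ) * z) / ((t : ℂ) - z) ∂ρ)
    (hmass : σ Set.univ ≤ ρ ({0} : Set ℝ))
    {z : ℂ} (hz : 0 < z.im) :
    z.im + z.im * (∫ t : ℝ, (Complex.normSq ((t:ℂ) - z))⁻¹ ∂σ)
      ≤ (cauchyF ν (-(cauchyG σ z))).im := by
  have hS : 0 < (σ Set.univ).toReal := by
    apply ENNReal.toReal_pos
    · simpa [Measure.measure_univ_eq_zero] using hσ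
    · exact measure_ne_top σ _
  have hmass' : (σ Set.univ).toReal ≤ (ρ ({0} : Set ℝ)).toReal :=
    ENNReal.toReal_mono (measure_ne_top ρ _) hmass
  set q := ∫ t : ℝ, (Complex.normSq ((t:ℂ) - z))⁻¹ ∂σ with hq
  have hqpos : 0 < q := q_pos hz hσ (integrable_normSq_inv hz σ)
  set w := ∫ t : ℝ, ((t:ℂ) - z)⁻¹ ∂σ with hwdef
  have hwim : w.im = z.im * q := im_int_inv_sub hz σ
  have hwimpos : 0 < w.im := by rw [hwim]; positivity
  have hns : Complex.normSq w ≤ (σ Set.univ).toReal * q := normSq_int_le hz σ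
  have hnspos : 0 < Complex.normSq w := by
    rw [Complex.normSq_pos]
    intro h
    rw [h] at hwimpos; simp at hwimpos
  rw [neg_cauchyG, ← hwdef]
  have hkey := imF_ge hrep hwimpos
  have hfrac : z.im / (σ Set.univ).toReal ≤ w.im / Complex.normSq w := by
    rw [div_le_div_iff₀ hS hnspos]
    calc z.im * Complex.normSq w ≤ z.im * ((σ Set.univ).toReal * q) := by
          exact mul_le_mul_of_nonneg_left hns hz.le
      _ = w.im * (σ Set.univ).toReal := by rw [hwim]; ring
  have hlam : z.im ≤ (ρ ({0} : Set ℝ)).toReal * (w.im / Complex.normSq w) := by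
    calc z.im = (σ Set.univ).toReal * (z.im / (σ Set.univ).toReal) := by
          field_simp
      _ ≤ (ρ ({0} : Set ℝ)).toReal * (z.im / (σ Set.univ).toReal) :=
          mul_le_mul_of_nonneg_right hmass' (div_nonneg hz.le hS.le)
      _ ≤ (ρ ({0} : Set ℝ)).toReal * (w.im / Complex.normSq w) := by
          apply mul_le_mul_of_nonneg_left hfrac
          exact le_trans hS.le hmass'
  have : z.im + w.im ≤ (cauchyF ν w).im := by linarith
  rw [hwim] at this
  linarith [this]

lemma step_pos (hσ : σ ≠ 0)
    (hrep : ∀ z ∈ UHP, cauchyF ν z =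
      (a : ℂ) + z + ∫ t : ℝ, (1 + (t : ℂ) * z) / ((t : ℂ) - z) ∂ρ)
    (hmass : σ Set.univ ≤ ρ ({0} : Set ℝ))
    {z : ℂ} (hz : 0 < z.im) : z.im ≤ (cauchyF ν (-(cauchyG σ z))).im := by
  have h := step_bound hσ hrep hmass hz
  have hqpos : 0 < ∫ t : ℝ, (Complex.normSq ((t:ℂ) - z))⁻¹ ∂σ :=
    q_pos hz hσ (integrable_normSq_inv hz σ)
  nlinarith

end

lemma escape (g : ℂ → ℂ) (R c : ℝ) (hR : 0 < R) (hc : 0 < c)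
    (hmono : ∀ z : ℂ, 0 < z.im → z.im ≤ (g z).im)
    (hgain : ∀ z : ℂ, 0 < z.im →
      z.im + z.im * (c * ((‖z‖ + R)^2)⁻¹) ≤ (g z).im)
    (z₀ : ℂ) (hz₀ : 0 < z₀.im) :
    Tendsto (fun n => ‖g^[n] z₀‖) atTop atTop := by
  classical
  set u : ℕ → ℝ := fun n => (g^[n] z₀).im with hu
  have hstep : ∀ n, u n ≤ u (n + 1) ∧ 0 < u n := by
    intro n
    induction n with
    | zero =>
      constructor
      · simpa [hu] using hmono z₀ hz₀
      · simpa [hu] using hz₀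
    | succ n ih =>
      have hpos : 0 < u (n+1) := lt_of_lt_of_le ih.2 ih.1
      constructor
      · have := hmono (g^[n+1] z₀) (by simpa [hu] using hpos)
        simpa [hu, Function.iterate_succ_apply'] using this
      · exact hpos
  have humono : Monotone u := monotone_nat_of_le_succ fun n => (hstep n).1
  have hupos : ∀ n, 0 < u n := fun n => (hstep n).2
  rw [tendsto_atTop]
  intro M
  set M' := max M 1 with hM'
  have hM'pos : (0:ℝ) < M' := lt_of_lt_of_le one_pos (le_max_right M 1)
  set δ := z₀.im * (c * ((M' + R)^2)⁻¹) with hδ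
  have hδpos : 0 < δ := by positivity
  set bad : ℕ → Prop := fun n => ‖g^[n] z₀‖ < M' with hbad
  have key1 : ∀ n, bad n → u n + δ ≤ u (n + 1) := by
    intro n hn
    have hzim : 0 < (g^[n] z₀).im := hupos n
    have h := hgain (g^[n] z₀) hzim
    have habs : ‖g^[n] z₀‖ + R ≤ M' + R := by
      have := le_of_lt hn; linarith
    have hpos2 : (0:ℝ) < ‖g^[n] z₀‖ + R := by
      have := norm_nonneg (g^[n] z₀); linarith
    have hinv : ((M' + R)^2)⁻¹ ≤ ((‖g^[n] z₀‖ + R)^2)⁻¹ := by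
      apply inv_anti₀ (by positivity)
      exact pow_le_pow_left₀ hpos2.le habs 2
    have hterm : δ ≤ (g^[n] z₀).im * (c * ((‖g^[n] z₀‖ + R)^2)⁻¹) := by
      rw [hδ]
      have h1 : z₀.im ≤ (g^[n] z₀).im := by
        have := humono (Nat.zero_le n)
        simpa [hu] using this
      apply mul_le_mul h1 (mul_le_mul_of_nonneg_left hinv hc.le) (by positivity) hzim.le
    have hfin : u (n+1) = (g (g^[n] z₀)).im := by
      simp [hu, Function.iterate_succ_apply']
    rw [hfin]
    calc u n + δ ≤ (g^[n] z₀).im + (g^[n] z₀).im * (c * ((‖g^[n] z₀‖ + R)^2)⁻¹) := by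
          have : u n = (g^[n] z₀).im := rfl
          linarith [hterm]
      _ ≤ _ := h
  set b : ℕ → ℕ := fun n => ((Finset.range n).filter bad).card with hb
  have hbmono : Monotone b := by
    intro m n hmn
    apply Finset.card_le_card
    apply Finset.filter_subset_filter
    exact Finset.range_subset_range.mpr hmn
  have key2 : ∀ n, u 0 + δ * (b n) ≤ u n := by
    intro n
    induction n with
    | zero => simp [hb]
    | succ n ih =>
      by_cases hn : bad n
      · have : b (n+1) = b n + 1 := by
          rw [hb]
          simp only [Finset.range_add_one]
          rw [Finset.filter_insert, if_pos hn,
            Finset.card_insert_of_notMem (by simp)]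
        rw [this]
        push_cast
        have := key1 n hn
        linarith
      · have : b (n+1) = b n := by
          rw [hb]
          simp only [Finset.range_add_one]
          rw [Finset.filter_insert, if_neg hn]
        rw [this]
        have := (hstep n).1
        linarith
  have key3 : ∀ n, bad n → δ * (b n) ≤ M' := by
    intro n hn
    have h1 : u n ≤ ‖g^[n] z₀‖ := Complex.im_le_norm _
    have h2 := key2 n
    have := hupos 0
    have := le_of_lt hn
    linarith
  -- eventually not bad
  have key4 : ∃ N, ∀ n, N ≤ n → ¬ bad n := by
    by_contra hcon
    push_neg at hcon
    have claim : ∀ k : ℕ, ∃ m, bad m ∧ k ≤ b m := by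
      intro k
      induction k with
      | zero =>
        obtain ⟨m, _, hm⟩ := hcon 0
        exact ⟨m, hm, Nat.zero_le _⟩
      | succ k ih =>
        obtain ⟨m, hmbad, hmk⟩ := ih
        obtain ⟨m', hm', hm'bad⟩ := hcon (m + 1)
        refine ⟨m', hm'bad, ?_⟩
        have h1 : b m + 1 ≤ b (m + 1) := by
          rw [hb]
          simp only [Finset.range_add_one]
          rw [Finset.filter_insert, if_pos hmbad,
            Finset.card_insert_of_notMem (by simp)]
        have h2 : b (m+1) ≤ b m' := hbmono hm'
        omega
    obtain ⟨m, hmbad, hmk⟩ := claim (Nat.ceil (M'/δ) + 1)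
    have h3 := key3 m hmbad
    have h4 : (b m : ℝ) ≤ M'/δ := by
      rw [le_div_iff₀ hδpos]
      linarith [h3]
    have h5 : (Nat.ceil (M'/δ) + 1 : ℝ) ≤ (b m : ℝ) := by exact_mod_cast hmk
    have h6 : M'/δ ≤ (Nat.ceil (M'/δ) : ℝ) := Nat.le_ceil _
    linarith
  obtain ⟨N, hN⟩ := key4
  refine eventually_atTop.mpr ⟨N, fun n hn => ?_⟩
  have := hN n hn
  rw [hbad] at this
  rw [not_lt] at this
  calc M ≤ M' := le_max_left _ _
    _ ≤ _ := this

lemma diff_int_inv {μ : Measure ℝ} [IsFiniteMeasure μ] {z₀ : ℂ} (hz₀ : 0 < z₀.im) :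
    DifferentiableAt ℂ (fun z : ℂ => ∫ t : ℝ, ((t : ℂ) - z)⁻¹ ∂μ) z₀ := by
  set ε := z₀.im / 2 with hε
  have hεpos : 0 < ε := by positivity
  have him : ∀ z ∈ Metric.ball z₀ ε, z₀.im/2 ≤ z.im := by
    intro z hz
    rw [Metric.mem_ball, Complex.dist_eq] at hz
    have : |z.im - z₀.im| ≤ ‖z - z₀‖ := by
      simpa [Complex.sub_im] using Complex.abs_im_le_norm (z - z₀)
    have := abs_le.mp (this.trans hz.le)
    linarith [this.1]
  have himpos : ∀ z ∈ Metric.ball z₀ ε, 0 < z.im := fun z hz =>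
    lt_of_lt_of_le (by positivity) (him z hz)
  have key := hasDerivAt_integral_of_dominated_loc_of_deriv_le (μ := μ)
    (F := fun (z : ℂ) (t : ℝ) => ((t : ℂ) - z)⁻¹)
    (F' := fun (z : ℂ) (t : ℝ) => (((t : ℂ) - z)^2)⁻¹)
    (x₀ := z₀) (bound := fun _ => ((z₀.im/2)^2)⁻¹) (Metric.ball_mem_nhds z₀ hεpos)
    ?_ (integrable_inv_sub hz₀ μ) ?_ ?_ (integrable_const _) ?_
  · exact key.2.differentiableAt
  · filter_upwards [Metric.ball_mem_nhds z₀ hεpos] with z hz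
    exact meas_inv_sub (himpos z hz) μ
  · apply Continuous.aestronglyMeasurable
    apply Continuous.inv₀
    · exact ((Complex.continuous_ofReal.sub continuous_const).pow 2)
    · intro t
      exact pow_ne_zero 2 (sub_ne_zero_of_im hz₀ t)
  · refine Eventually.of_forall fun t => fun z hz => ?_
    rw [norm_inv]
    apply inv_anti₀ (by positivity)
    have h1 : z₀.im/2 ≤ ‖(t:ℂ) - z‖ := by
      have h2 := norm_inv_sub_le (himpos z hz) t
      calc z₀.im/2 ≤ z.im := him z hz
        _ ≤ ‖(t:ℂ) - z‖ := by
          have : |((t:ℂ) - z).im| ≤ ‖(t:ℂ) - z‖ := Complex.abs_im_le_norm _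
          simp only [Complex.sub_im, Complex.ofReal_im, zero_sub, abs_neg] at this
          calc z.im = |z.im| := (abs_of_pos (himpos z hz)).symm
            _ ≤ _ := this
    calc (z₀.im/2)^2 ≤ ‖(t:ℂ) - z‖^2 := pow_le_pow_left₀ (by positivity) h1 2
      _ = ‖((t:ℂ) - z)^2‖ := by rw [norm_pow]
  · refine Eventually.of_forall fun t => fun z hz => ?_
    have hne : (t:ℂ) - z ≠ 0 := sub_ne_zero_of_im (himpos z hz) t
    have hd : HasDerivAt (fun w : ℂ => (t:ℂ) - w) (-1) z := by
      simpa using ((hasDerivAt_id z).const_sub ((t:ℂ)))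
    have := hd.inv hne
    convert this using 1
    · rfl
    · funext x; rfl
    · simp

section
variable {σ ν ρ : Measure ℝ} [IsFiniteMeasure σ] [IsProbabilityMeasure ν] [IsFiniteMeasure ρ] {a : ℝ}

lemma int_frac_eq {z : ℂ} (hz : 0 < z.im) (ρ : Measure ℝ) [IsFiniteMeasure ρ] :
    ∫ t : ℝ, (1 + (t:ℂ) * z) / ((t:ℂ) - z) ∂ρ
      = (ρ Set.univ).toReal • z + (1 + z^2) * ∫ t : ℝ, ((t:ℂ) - z)⁻¹ ∂ρ := by
  have h1 : (fun t : ℝ => (1 + (t:ℂ) * z) / ((t:ℂ) - z))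
      = fun t : ℝ => z + (1 + z^2) * ((t:ℂ) - z)⁻¹ := funext fun t => frac_eq hz t
  rw [h1, integral_add (integrable_const z) ((integrable_inv_sub hz ρ).const_mul _),
    integral_const, integral_const_mul, measureReal_def]

lemma part1_limit (hσ : σ ≠ 0)
    (hrep : ∀ z ∈ UHP, cauchyF ν z =
      (a : ℂ) + z + ∫ t : ℝ, (1 + (t : ℂ) * z) / ((t : ℂ) - z) ∂ρ) :
    Tendsto
      (fun y : ℝ =>
        cauchyF ν (-(∫ t : ℝ, (((y : ℂ) * Complex.I) - (t : ℂ))⁻¹ ∂σ)) /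
          ((y : ℂ) * Complex.I))
      atTop (𝓝 (((ρ ({0} : Set ℝ)).toReal / (σ Set.univ).toReal : ℝ) : ℂ)) := by
  classical
  set S := (σ Set.univ).toReal with hSdef
  have hS : 0 < S := by
    apply ENNReal.toReal_pos
    · simpa [Measure.measure_univ_eq_zero] using hσ
    · exact measure_ne_top σ _
  set r0 := (ρ ({0} : Set ℝ)).toReal with hr0def
  set w : ℝ → ℂ := fun y => ∫ t : ℝ, ((t:ℂ) - (y:ℂ)*Complex.I)⁻¹ ∂σ with hwdef
  have him_yI : ∀ y : ℝ, 0 < y → 0 < ((y:ℂ)*Complex.I).im := by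
    intro y hy; simpa using hy
  -- Step 0 : rewrite the function
  have hfun : ∀ y : ℝ, -(∫ t : ℝ, (((y : ℂ) * Complex.I) - (t : ℂ))⁻¹ ∂σ) = w y := by
    intro y
    rw [hwdef, ← integral_neg]
    congr 1; funext t
    rw [← inv_neg, neg_sub]
  simp only [hfun]
  -- Step 1 : y I * w y → -S
  have hyw : Tendsto (fun y : ℝ => (y:ℂ)*Complex.I * w y) atTop (𝓝 (-(S:ℂ))) := by
    have hint : ∀ᶠ y : ℝ in atTop, (y:ℂ)*Complex.I * w y
        = ∫ t : ℝ, (y:ℂ)*Complex.I * ((t:ℂ) - (y:ℂ)*Complex.I)⁻¹ ∂σ := by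
      filter_upwards [eventually_gt_atTop (0:ℝ)] with y hy
      rw [hwdef, integral_const_mul]
    rw [tendsto_congr' hint]
    have hlim : Tendsto (fun y : ℝ => ∫ t : ℝ,
        (y:ℂ)*Complex.I * ((t:ℂ) - (y:ℂ)*Complex.I)⁻¹ ∂σ) atTop
        (𝓝 (∫ _t : ℝ, (-1 : ℂ) ∂σ)) := by
      apply tendsto_integral_filter_of_dominated_convergence (bound := fun _ => (1:ℝ))
      · filter_upwards [eventually_gt_atTop (0:ℝ)] with y hy
        exact (meas_inv_sub (him_yI y hy) σ).const_mul _
      · filter_upwards [eventually_gt_atTop (0:ℝ)] with y hy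
        refine Eventually.of_forall fun t => ?_
        rw [norm_mul]
        have h1 := norm_inv_sub_le (him_yI y hy) t
        have h2 : ‖(y:ℂ)*Complex.I‖ = y := by
          simp [abs_of_pos hy]
        rw [h2]
        calc y * ‖((t:ℂ) - (y:ℂ)*Complex.I)⁻¹‖ ≤ y * (((y:ℂ)*Complex.I).im)⁻¹ :=
              mul_le_mul_of_nonneg_left h1 hy.le
          _ = 1 := by
              have : ((y:ℂ)*Complex.I).im = y := by simp
              rw [this]; field_simp
      · exact integrable_const _
      · refine Eventually.of_forall fun t => ?_
        have heq : ∀ᶠ y : ℝ in atTop, (y:ℂ)*Complex.I * ((t:ℂ) - (y:ℂ)*Complex.I)⁻¹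
            = -1 + (t:ℂ) * ((t:ℂ) - (y:ℂ)*Complex.I)⁻¹ := by
          filter_upwards [eventually_gt_atTop (0:ℝ)] with y hy
          have hne := sub_ne_zero_of_im (him_yI y hy) t
          field_simp
          ring
        rw [tendsto_congr' heq]
        have h0 : Tendsto (fun y : ℝ => (t:ℂ) * ((t:ℂ) - (y:ℂ)*Complex.I)⁻¹) atTop (𝓝 0) := by
          apply squeeze_zero_norm' (a := fun y : ℝ => |t| * y⁻¹)
          · filter_upwards [eventually_gt_atTop (0:ℝ)] with y hy
            rw [norm_mul]
            have h1 := norm_inv_sub_le (him_yI y hy) t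
            have : ((y:ℂ)*Complex.I).im = y := by simp
            rw [this] at h1
            calc ‖(t:ℂ)‖ * ‖((t:ℂ) - (y:ℂ)*Complex.I)⁻¹‖ ≤ ‖(t:ℂ)‖ * y⁻¹ :=
                  mul_le_mul_of_nonneg_left h1 (norm_nonneg _)
              _ = |t| * y⁻¹ := by rw [Complex.norm_real, Real.norm_eq_abs]
          · simpa using tendsto_inv_atTop_zero.const_mul |t|
        simpa using (tendsto_const_nhds (x := (-1:ℂ))).add h0
    convert hlim using 2
    rw [integral_const]
    simp [hSdef, Complex.real_smul, measureReal_def]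
  -- Step 2 : y * (w y).im → S
  have hyimw : Tendsto (fun y : ℝ => y * (w y).im) atTop (𝓝 S) := by
    have hre : Tendsto (fun y : ℝ => ((y:ℂ)*Complex.I * w y).re) atTop (𝓝 (-(S:ℂ)).re) :=
      (Complex.continuous_re.tendsto _).comp hyw
    have heq : (fun y : ℝ => ((y:ℂ)*Complex.I * w y).re) = fun y : ℝ => -(y * (w y).im) := by
      funext y
      simp [Complex.mul_re, Complex.mul_im]
    rw [heq] at hre
    have := hre.neg
    simpa using this
  -- Step 3 : eventual bounds
  have hev : ∀ᶠ y : ℝ in atTop, 1 ≤ y ∧ S/2 ≤ y * (w y).im ∧ 0 < (w y).im := by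
    have h1 : ∀ᶠ y : ℝ in atTop, S/2 ≤ y * (w y).im :=
      hyimw.eventually (eventually_ge_nhds (by linarith))
    filter_upwards [h1, eventually_ge_atTop (1:ℝ)] with y h1 h2
    refine ⟨h2, h1, ?_⟩
    nlinarith
  -- Step 4 : w y → 0
  have hw0 : Tendsto w atTop (𝓝 0) := by
    have hinv : Tendsto (fun y : ℝ => ((y:ℂ)*Complex.I)⁻¹) atTop (𝓝 0) := by
      apply squeeze_zero_norm' (a := fun y : ℝ => y⁻¹)
      · filter_upwards [eventually_gt_atTop (0:ℝ)] with y hy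
        rw [norm_inv]
        have h2 : ‖(y:ℂ)*Complex.I‖ = y := by simp [abs_of_pos hy]
        rw [h2]
      · exact tendsto_inv_atTop_zero
    have heq : ∀ᶠ y : ℝ in atTop, ((y:ℂ)*Complex.I * w y) * ((y:ℂ)*Complex.I)⁻¹ = w y := by
      filter_upwards [eventually_gt_atTop (0:ℝ)] with y hy
      have hne : (y:ℂ)*Complex.I ≠ 0 := by
        simp [Complex.ext_iff]
        intro h; rw [h] at hy; simp at hy
      field_simp
      exact mul_div_cancel_left₀ (w y) (Complex.ofReal_ne_zero.mpr hy.ne')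
    rw [← tendsto_congr' heq]
    simpa using hyw.mul hinv
  -- Step 5 : key dominated convergence
  set G : ℝ → ℂ := Set.indicator ({0} : Set ℝ) (fun _ => (S:ℂ)⁻¹) with hGdef
  have hSne : (S:ℂ) ≠ 0 := by
    simp only [ne_eq, Complex.ofReal_eq_zero]
    exact ne_of_gt hS
  have hkey : Tendsto (fun y : ℝ => ∫ t : ℝ, (((y:ℂ)*Complex.I) * ((t:ℂ) - w y))⁻¹ ∂ρ)
      atTop (𝓝 (∫ t : ℝ, G t ∂ρ)) := by
    apply tendsto_integral_filter_of_dominated_convergence (bound := fun _ => 2/S)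
    · filter_upwards [hev] with y hy
      have : (fun t : ℝ => (((y:ℂ)*Complex.I) * ((t:ℂ) - w y))⁻¹)
          = fun t : ℝ => ((y:ℂ)*Complex.I)⁻¹ * ((t:ℂ) - w y)⁻¹ := by
        funext t; rw [mul_inv]
      rw [this]
      exact (meas_inv_sub hy.2.2 ρ).const_mul _
    · filter_upwards [hev] with y hy
      refine Eventually.of_forall fun t => ?_
      have hy1 : (0:ℝ) < y := lt_of_lt_of_le one_pos hy.1
      rw [mul_inv, norm_mul, norm_inv]
      have h2 : ‖(y:ℂ)*Complex.I‖ = y := by simp [abs_of_pos hy1]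
      rw [h2]
      have h3 := norm_inv_sub_le hy.2.2 t
      calc y⁻¹ * ‖((t:ℂ) - w y)⁻¹‖ ≤ y⁻¹ * ((w y).im)⁻¹ :=
            mul_le_mul_of_nonneg_left h3 (by positivity)
        _ = (y * (w y).im)⁻¹ := by rw [mul_inv]
        _ ≤ (S/2)⁻¹ := by
            apply inv_anti₀ (by positivity) hy.2.1
        _ = 2/S := by rw [inv_div]
    · exact integrable_const _
    · refine Eventually.of_forall fun t => ?_
      by_cases ht : t = 0
      · subst ht
        have heq : ∀ y : ℝ, (((y:ℂ)*Complex.I) * (((0:ℝ):ℂ) - w y))⁻¹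
            = (-(((y:ℂ)*Complex.I) * w y))⁻¹ := by
          intro y; congr 1; push_cast; ring
        simp only [heq]
        have hlim : Tendsto (fun y : ℝ => -(((y:ℂ)*Complex.I) * w y)) atTop (𝓝 (S:ℂ)) := by
          simpa using hyw.neg
        have := hlim.inv₀ hSne
        have hG0 : G 0 = (S:ℂ)⁻¹ := by simp [hGdef]
        rw [hG0]
        exact this
      · have hGt : G t = 0 := by simp [hGdef, ht]
        rw [hGt]
        have htpos : (0:ℝ) < |t| := abs_pos.mpr ht
        have hnorm : Tendsto (fun y : ℝ => ‖(t:ℂ) - w y‖) atTop (𝓝 |t|) := by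
          have : Tendsto (fun y : ℝ => (t:ℂ) - w y) atTop (𝓝 ((t:ℂ) - 0)) :=
            tendsto_const_nhds.sub hw0
          have h2 := (continuous_norm.tendsto _).comp this
          simpa [Function.comp_def] using h2
        have hev2 : ∀ᶠ y : ℝ in atTop, |t|/2 ≤ ‖(t:ℂ) - w y‖ :=
          hnorm.eventually (eventually_ge_nhds (by linarith))
        apply squeeze_zero_norm' (a := fun y : ℝ => (y * (|t|/2))⁻¹)
        · filter_upwards [hev2, eventually_gt_atTop (0:ℝ)] with y h1 hy
          rw [mul_inv, norm_mul, norm_inv, norm_inv]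
          have h2 : ‖(y:ℂ)*Complex.I‖ = y := by simp [abs_of_pos hy]
          rw [h2, mul_inv]
          apply mul_le_mul_of_nonneg_left _ (by positivity)
          exact inv_anti₀ (by positivity) h1
        · have h4 : Tendsto (fun y : ℝ => y * (|t|/2)) atTop atTop :=
            Tendsto.atTop_mul_const (by positivity) tendsto_id
          exact h4.inv_tendsto_atTop
  -- value of ∫ G
  have hGint : ∫ t : ℝ, G t ∂ρ = r0 • (S:ℂ)⁻¹ := by
    rw [hGdef, integral_indicator_const _ (measurableSet_singleton 0), measureReal_def]
  -- Step 6 : assemble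
  have hint_eq : ∀ᶠ y : ℝ in atTop,
      cauchyF ν (w y) / ((y:ℂ)*Complex.I)
        = (a:ℂ) * ((y:ℂ)*Complex.I)⁻¹
          + (1 + (ρ Set.univ).toReal) * (w y * ((y:ℂ)*Complex.I)⁻¹)
          + (1 + (w y)^2) * ∫ t : ℝ, (((y:ℂ)*Complex.I) * ((t:ℂ) - w y))⁻¹ ∂ρ := by
    filter_upwards [hev] with y hy
    have hy1 : (0:ℝ) < y := lt_of_lt_of_le one_pos hy.1
    have hwUHP : w y ∈ UHP := hy.2.2
    have hrw := hrep (w y) hwUHP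
    rw [int_frac_eq hy.2.2 ρ] at hrw
    have hinv_int : ∫ t : ℝ, (((y:ℂ)*Complex.I) * ((t:ℂ) - w y))⁻¹ ∂ρ
        = ((y:ℂ)*Complex.I)⁻¹ * ∫ t : ℝ, ((t:ℂ) - w y)⁻¹ ∂ρ := by
      rw [← integral_const_mul]
      congr 1; funext t; rw [mul_inv]
    rw [hrw, hinv_int, div_eq_mul_inv]
    simp only [Complex.real_smul]
    ring
  rw [tendsto_congr' hint_eq]
  have hinv : Tendsto (fun y : ℝ => ((y:ℂ)*Complex.I)⁻¹) atTop (𝓝 0) := by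
    apply squeeze_zero_norm' (a := fun y : ℝ => y⁻¹)
    · filter_upwards [eventually_gt_atTop (0:ℝ)] with y hy
      rw [norm_inv]
      have h2 : ‖(y:ℂ)*Complex.I‖ = y := by simp [abs_of_pos hy]
      rw [h2]
    · exact tendsto_inv_atTop_zero
  have hA1 : Tendsto (fun y : ℝ => (a:ℂ) * ((y:ℂ)*Complex.I)⁻¹) atTop (𝓝 0) := by
    simpa using hinv.const_mul (a:ℂ)
  have hA2 : Tendsto (fun y : ℝ => (1 + (ρ Set.univ).toReal) * (w y * ((y:ℂ)*Complex.I)⁻¹))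
      atTop (𝓝 0) := by
    have := (hw0.mul hinv).const_mul ((1:ℂ) + (ρ Set.univ).toReal)
    simpa using this
  have hA3 : Tendsto (fun y : ℝ => (1:ℂ) + (w y)^2) atTop (𝓝 1) := by
    have := hw0.pow 2
    have h2 := (tendsto_const_nhds (x := (1:ℂ))).add (hw0.pow 2)
    simpa using h2
  have hA4 := hA3.mul hkey
  rw [hGint] at hA4
  have htot := (hA1.add hA2).add hA4
  have hval : ((0:ℂ) + 0) + 1 * (r0 • (S:ℂ)⁻¹) = ((r0 / S : ℝ) : ℂ) := by
    simp [Complex.real_smul]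
    rw [div_eq_mul_inv]
  rw [hval] at htot
  exact htot

end

section
variable {σ ν : Measure ℝ} [IsFiniteMeasure σ] [IsProbabilityMeasure ν]

lemma cauchyG_eq (μ : Measure ℝ) :
    cauchyG μ = fun z : ℂ => -(∫ t : ℝ, ((t : ℂ) - z)⁻¹ ∂μ) := by
  funext z
  rw [← neg_cauchyG]; ring

lemma cauchyG_diff {μ : Measure ℝ} [IsFiniteMeasure μ] {z : ℂ} (hz : 0 < z.im) :
    DifferentiableAt ℂ (cauchyG μ) z := by
  rw [cauchyG_eq μ]
  exact (diff_int_inv hz).neg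

lemma im_neg_cauchyG {μ : Measure ℝ} [IsFiniteMeasure μ] {z : ℂ} (hz : 0 < z.im)
    (hμ : μ ≠ 0) : 0 < (-(cauchyG μ z)).im := by
  rw [neg_cauchyG, im_int_inv_sub hz μ]
  have := q_pos hz hμ (integrable_normSq_inv hz μ)
  positivity

lemma cauchyG_ne_zero {z : ℂ} (hz : 0 < z.im) : cauchyG ν z ≠ 0 := by
  intro h
  have h2 : 0 < (-(cauchyG ν z)).im := by
    apply im_neg_cauchyG hz
    exact IsProbabilityMeasure.ne_zero ν
  rw [h] at h2
  simp at h2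

lemma g_diff (hσ : σ ≠ 0) {z : ℂ} (hz : 0 < z.im) :
    DifferentiableAt ℂ (fun w : ℂ => cauchyF ν (-(cauchyG σ w))) z := by
  have h1 : DifferentiableAt ℂ (fun w : ℂ => -(cauchyG σ w)) z := (cauchyG_diff hz).neg
  have hw : 0 < (-(cauchyG σ z)).im := im_neg_cauchyG hz hσ
  have h2 : DifferentiableAt ℂ (cauchyG ν) (-(cauchyG σ z)) := cauchyG_diff hw
  have h3 : DifferentiableAt ℂ (fun w : ℂ => cauchyG ν (-(cauchyG σ w))) z := DifferentiableAt.comp (g := cauchyG ν) (f := fun w : ℂ => -(cauchyG σ w)) z h2 h1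
  have hne : cauchyG ν (-(cauchyG σ z)) ≠ 0 := cauchyG_ne_zero hw
  exact h3.inv hne

end

lemma uniform_escape (g : ℂ → ℂ)
    (hdiff : ∀ z : ℂ, 0 < z.im → DifferentiableAt ℂ g z)
    (hmono : ∀ z : ℂ, 0 < z.im → z.im ≤ (g z).im)
    (hesc : ∀ z₀ : ℂ, 0 < z₀.im → Tendsto (fun n => ‖g^[n] z₀‖) atTop atTop)
    (K : Set ℂ) (hK : K ⊆ {z : ℂ | 0 < z.im}) (hKc : IsCompact K) (M : ℝ) :
    ∀ᶠ n : ℕ in atTop, ∀ z ∈ K, M ≤ ‖g^[n] z‖ := by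
  classical
  -- iterates preserve the upper half plane and are differentiable
  have hiter : ∀ n : ℕ, (∀ z : ℂ, 0 < z.im → 0 < ((g^[n]) z).im)
      ∧ (∀ z : ℂ, 0 < z.im → DifferentiableAt ℂ (g^[n]) z) := by
    intro n
    induction n with
    | zero => exact ⟨fun z hz => by simpa using hz, fun z hz => by
        simpa using differentiableAt_id'⟩
    | succ n ih =>
      constructor
      · intro z hz
        have h1 := ih.1 z hz
        have := hmono _ h1
        rw [Function.iterate_succ_apply']
        linarith
      · intro z hz
        rw [Function.iterate_succ']
        exact (hdiff _ (ih.1 z hz)).comp (x := z) (ih.2 z hz)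
  set k : ℕ → ℂ → ℂ := fun n z => ((g^[n]) z + Complex.I)⁻¹ with hk
  have hne : ∀ n : ℕ, ∀ z : ℂ, 0 < z.im → (g^[n]) z + Complex.I ≠ 0 := by
    intro n z hz h
    have h1 := (hiter n).1 z hz
    have : ((g^[n]) z + Complex.I).im = 0 := by rw [h]; simp
    simp only [Complex.add_im, Complex.I_im] at this
    linarith
  have hkdiff : ∀ n : ℕ, ∀ z : ℂ, 0 < z.im → DifferentiableAt ℂ (k n) z := by
    intro n z hz
    exact (((hiter n).2 z hz).add_const Complex.I).inv (hne n z hz)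
  have hkbound : ∀ n : ℕ, ∀ z : ℂ, 0 < z.im → ‖k n z‖ ≤ 1 := by
    intro n z hz
    rw [hk, norm_inv]
    have h1 := (hiter n).1 z hz
    have h2 : (1:ℝ) ≤ ‖(g^[n]) z + Complex.I‖ := by
      have him : ((g^[n]) z + Complex.I).im = ((g^[n]) z).im + 1 := by simp
      calc (1:ℝ) ≤ ((g^[n]) z).im + 1 := by linarith
        _ = |((g^[n]) z + Complex.I).im| := by rw [him]; rw [abs_of_pos]; linarith
        _ ≤ ‖(g^[n]) z + Complex.I‖ := Complex.abs_im_le_norm _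
    rw [inv_le_one_iff₀]
    right; exact h2
  have hkzero : ∀ c : ℂ, 0 < c.im → Tendsto (fun n => k n c) atTop (𝓝 0) := by
    intro c hc
    have h1 := hesc c hc
    apply squeeze_zero_norm' (a := fun n => (‖(g^[n]) c‖ - 1)⁻¹)
    · filter_upwards [h1.eventually (eventually_ge_atTop (2:ℝ))] with n hn
      rw [hk, norm_inv]
      apply inv_anti₀ (by linarith)
      have : ‖(g^[n]) c‖ ≤ ‖(g^[n]) c + Complex.I‖ + 1 := by
        calc ‖(g^[n]) c‖ = ‖((g^[n]) c + Complex.I) + (-Complex.I)‖ := by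
              congr 1; ring
          _ ≤ ‖(g^[n]) c + Complex.I‖ + ‖-Complex.I‖ :=
              norm_add_le _ _
          _ = ‖(g^[n]) c + Complex.I‖ + 1 := by simp
      calc ‖(g^[n]) c‖ - 1 ≤ ‖(g^[n]) c + Complex.I‖ := by linarith
        _ = ‖(g^[n]) c + Complex.I‖ := rfl
    · have h2 : Tendsto (fun n => ‖(g^[n]) c‖ - 1) atTop atTop :=
        tendsto_atTop_add_const_right _ _ h1
      exact h2.inv_tendsto_atTop
  -- choose ε
  set M₀ := max M 0 with hM₀
  set ε := (M₀ + 2)⁻¹ with hε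
  have hεpos : 0 < ε := by
    rw [hε]
    have : (0:ℝ) ≤ M₀ := le_max_right _ _
    positivity
  -- the covering radii
  set r : ℂ → ℝ := fun c => min (c.im/2) (ε * c.im/12) with hr
  have hrpos : ∀ c ∈ K, 0 < r c := by
    intro c hc
    have := hK hc
    simp only [Set.mem_setOf_eq] at this
    rw [hr]
    apply lt_min <;> [linarith; positivity]
  -- compactness: finite subcover
  have hcover : K ⊆ ⋃ c ∈ K, Metric.ball c (r c) := by
    intro z hz
    simp only [Set.mem_iUnion]
    exact ⟨z, hz, by simpa using hrpos z hz⟩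
  obtain ⟨t, htcover⟩ := hKc.elim_nhds_subcover' (fun c hc => Metric.ball c (r c))
    (fun c hc => Metric.ball_mem_nhds _ (hrpos c hc))
  -- eventually the centers are small
  have hcenters : ∀ᶠ n : ℕ in atTop, ∀ c ∈ t, ‖k n (c : ℂ)‖ ≤ ε/2 := by
    rw [eventually_all_finset]
    intro c hc
    have hcK : (c : ℂ) ∈ K := c.2
    have hcim : 0 < (c : ℂ).im := hK hcK
    have := hkzero c hcim
    have h2 := this.norm
    simp only [norm_zero] at h2
    exact h2.eventually (eventually_le_nhds (by positivity))
  filter_upwards [hcenters] with n hn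
  intro z hz
  obtain ⟨c, hct, hzc⟩ := Set.mem_iUnion₂.mp (htcover hz)
  have hcK : (c : ℂ) ∈ K := c.2
  have hcim : 0 < (c : ℂ).im := hK hcK
  -- Schwarz estimate on the ball around c
  have hball : Metric.ball (c : ℂ) ((c:ℂ).im) ⊆ {z : ℂ | 0 < z.im} := by
    intro x hx
    rw [Metric.mem_ball, Complex.dist_eq] at hx
    have h1 : |x.im - (c:ℂ).im| ≤ ‖x - c‖ := by
      simpa [Complex.sub_im] using Complex.abs_im_le_norm (x - (c:ℂ))
    have := abs_lt.mp (lt_of_le_of_lt h1 hx)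
    simp only [Set.mem_setOf_eq]
    linarith [this.1]
  have hdOn : DifferentiableOn ℂ (k n) (Metric.ball (c : ℂ) ((c:ℂ).im)) := by
    intro x hx
    exact (hkdiff n x (hball hx)).differentiableWithinAt
  have hmapsTo : Set.MapsTo (k n) (Metric.ball (c : ℂ) ((c:ℂ).im))
      (Metric.ball (k n c) 3) := by
    intro x hx
    rw [Metric.mem_ball, dist_eq_norm]
    calc ‖k n x - k n c‖ ≤ ‖k n x‖ + ‖k n c‖ := norm_sub_le _ _
      _ ≤ 1 + 1 := add_le_add (hkbound n x (hball hx)) (hkbound n c hcim)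
      _ < 3 := by norm_num
  have hzball : z ∈ Metric.ball (c : ℂ) ((c:ℂ).im) := by
    rw [Metric.mem_ball]
    calc dist z c < r c := Metric.mem_ball.mp hzc
      _ ≤ (c:ℂ).im/2 := min_le_left _ _
      _ < (c:ℂ).im := by linarith
  have hschwarz := Complex.dist_le_div_mul_dist_of_mapsTo_ball hdOn (hmapsTo.mono_right Metric.ball_subset_closedBall) hzball
  have hdist : dist z (c:ℂ) ≤ ε * (c:ℂ).im/12 := by
    calc dist z (c:ℂ) ≤ r c := le_of_lt (Metric.mem_ball.mp hzc)
      _ ≤ _ := min_le_right _ _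
  have hdist2 : dist (k n z) (k n c) ≤ ε/2 := by
    calc dist (k n z) (k n c) ≤ 3 / (c:ℂ).im * dist z c := hschwarz
      _ ≤ 3 / (c:ℂ).im * (ε * (c:ℂ).im/12) := by
          apply mul_le_mul_of_nonneg_left hdist (by positivity)
      _ = ε/4 := by field_simp; ring
      _ ≤ ε/2 := by linarith
  have hknz : ‖k n z‖ ≤ ε := by
    calc ‖k n z‖ ≤ ‖k n z - k n c‖ + ‖k n c‖ := by
          simpa using norm_add_le (k n z - k n c) (k n c)
      _ ≤ ε/2 + ε/2 := add_le_add (by rw [← dist_eq_norm]; exact hdist2) (hn c hct)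
      _ = ε := by ring
  -- conclude
  have hzim : 0 < z.im := hK hz
  have hne' : (g^[n]) z + Complex.I ≠ 0 := hne n z hzim
  have hnorm_ge : M₀ + 2 ≤ ‖(g^[n]) z + Complex.I‖ := by
    have h1 : ‖k n z‖ = ‖(g^[n]) z + Complex.I‖⁻¹ := by rw [hk, norm_inv]
    rw [h1] at hknz
    have h2 : (0:ℝ) < ‖(g^[n]) z + Complex.I‖ := by
      rw [norm_pos_iff]; exact hne'
    have hM₀ : (0:ℝ) ≤ M₀ := le_max_right _ _
    rw [hε, inv_le_inv₀ h2 (by positivity)] at hknz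
    exact hknz
  calc M ≤ M₀ := le_max_left _ _
    _ ≤ ‖(g^[n]) z + Complex.I‖ - 1 := by
        have : ‖(g^[n]) z + Complex.I‖ = ‖(g^[n]) z + Complex.I‖ := rfl
        rw [this] at hnorm_ge
        linarith
    _ ≤ ‖(g^[n]) z‖ := by
        have : ‖(g^[n]) z + Complex.I‖ ≤ ‖(g^[n]) z‖ + 1 := by
          calc ‖(g^[n]) z + Complex.I‖
              ≤ ‖(g^[n]) z‖ + ‖Complex.I‖ := norm_add_le _ _
            _ = ‖(g^[n]) z‖ + 1 := by simp
        linarith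

/-- Let `φ` be the Cauchy transform of a nonzero positive finite measure
`σ`, and let `ν` have Nevanlinna representation `F_ν(z) = a + z + ∫ (1+tz)/(t-z) dρ(t)`.
If `ρ({0}) ≥ σ(ℝ)`, then `F_ν(-φ(iy))/(iy) → ρ({0})/σ(ℝ) ≥ 1` as `y → +∞`; in particular
the self-map `g(z) = F_ν(-φ(z))` of `ℂ⁺` has `∞` as its Denjoy–Wolff point: its iterates
leave every bounded set, uniformly on compact subsets of `ℂ⁺`. -/
theorem stmt8 (σ : Measure ℝ) [IsFiniteMeasure σ] (hσ : σ ≠ 0)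
    (ν : Measure ℝ) [IsProbabilityMeasure ν]
    (a : ℝ) (ρ : Measure ℝ) [IsFiniteMeasure ρ]
    (hrep : ∀ z ∈ UHP, cauchyF ν z =
      (a : ℂ) + z + ∫ t : ℝ, (1 + (t : ℂ) * z) / ((t : ℂ) - z) ∂ρ)
    (hmass : σ Set.univ ≤ ρ ({0} : Set ℝ)) :
    Tendsto
      (fun y : ℝ =>
        cauchyF ν (-(∫ t : ℝ, (((y : ℂ) * Complex.I) - (t : ℂ))⁻¹ ∂σ)) /
          ((y : ℂ) * Complex.I))
      atTop (nhds (((ρ ({0} : Set ℝ)).toReal / (σ Set.univ).toReal : ℝ) : ℂ)) ∧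
    (1 : ℝ) ≤ (ρ ({0} : Set ℝ)).toReal / (σ Set.univ).toReal ∧
    (∀ K : Set ℂ, K ⊆ UHP → IsCompact K → ∀ M : ℝ,
      ∀ᶠ n : ℕ in atTop, ∀ z ∈ K,
        M ≤ ‖(fun w => cauchyF ν (-(cauchyG σ w)))^[n] z‖) := by
  have hS : 0 < (σ Set.univ).toReal := by
    apply ENNReal.toReal_pos
    · simpa [Measure.measure_univ_eq_zero] using hσ
    · exact measure_ne_top σ _
  have hmass' : (σ Set.univ).toReal ≤ (ρ ({0} : Set ℝ)).toReal :=
    ENNReal.toReal_mono (measure_ne_top ρ _) hmass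
  refine ⟨part1_limit hσ hrep, (one_le_div hS).mpr hmass', ?_⟩
  intro K hKU hKc M
  obtain ⟨R, hR, hc⟩ := sigma_icc hσ
  have hmono : ∀ z : ℂ, 0 < z.im →
      z.im ≤ ((fun w => cauchyF ν (-(cauchyG σ w))) z).im :=
    fun z hz => step_pos hσ hrep hmass hz
  have hgain : ∀ z : ℂ, 0 < z.im →
      z.im + z.im * ((σ (Icc (-R) R)).toReal * ((‖z‖ + R)^2)⁻¹)
        ≤ ((fun w => cauchyF ν (-(cauchyG σ w))) z).im := by
    intro z hz
    have h1 := step_bound hσ hrep hmass hz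
    have h2 := q_lower (σ := σ) hz R hR
    have h3 := mul_le_mul_of_nonneg_left h2 hz.le
    simpa using le_trans (by linarith) h1
  have hesc := escape (fun w => cauchyF ν (-(cauchyG σ w))) R
    (σ (Icc (-R) R)).toReal hR hc hmono hgain
  exact uniform_escape (fun w => cauchyF ν (-(cauchyG σ w)))
    (fun z hz => g_diff hσ hz) hmono hesc K hKU hKc M

end
end

section
/- Let λ ∈ (0,1) and let μ be a symmetric Borel probability measure on ℝ that is ⊞_λ-infinitely divisible with rectangular R-transform C arising from a symmetric positive finite Borel measure G. Then H_μ(z) = z·T(C(H_μ(z))) for all z ∈ ℂ∖[0,∞) (so H_μ is a right inverse of the function w ↦ w/T(C(w))), and H_μ is injective on ℂ∖[0,∞). -/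
open MeasureTheory Complex Set Filter Topology

noncomputable section

/-- `T(w) = (λ w + 1)(w + 1)`. -/
def Tfun (l : ℝ) (w : ℂ) : ℂ := ((l : ℂ) * w + 1) * (w + 1)

/-- The rectangular `R`-transform with Lévy measure `G`:
`C(z) = z ∫ (1+t²)/(1-z t²) dG(t)`. -/
def rectC (G : Measure ℝ) (z : ℂ) : ℂ :=
  z * ∫ t : ℝ, (1 + (t : ℂ) ^ 2) / (1 - z * (t : ℂ) ^ 2) ∂G

/-- `μ` is `⊞_λ`-infinitely divisible with rectangular `R`-transform `C = rectC G`: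
`H_μ(x) = x T(C(H_μ(x)))` for `x < 0` close to `0`. -/
def IsRectInfDiv (l : ℝ) (μ G : Measure ℝ) : Prop :=
  ∃ ε > (0 : ℝ), ∀ x ∈ Set.Ioo (-ε) (0 : ℝ),
    Ht l μ (x : ℂ) = (x : ℂ) * Tfun l (rectC G (Ht l μ (x : ℂ)))

/-- `ρ` is the rectangular free convolution `μ ⊞_λ ν`, where `μ` has rectangular
`R`-transform `rectC G`. -/
def IsRectConv (l : ℝ) (G ν ρ : Measure ℝ) : Prop :=
  ∃ ε > (0 : ℝ), ∀ x ∈ Set.Ioo (-ε) (0 : ℝ),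
    Tfun l (Mt ρ (x : ℂ) - rectC G (Ht l ρ (x : ℂ))) ≠ 0 ∧
    Ht l ρ (x : ℂ) =
      Ht l ν (Ht l ρ (x : ℂ) / Tfun l (Mt ρ (x : ℂ) - rectC G (Ht l ρ (x : ℂ))))

namespace Stmt10Aux

lemma not_posAxis_iff {z : ℂ} : z ∉ posAxis ↔ z.re < 0 ∨ z.im ≠ 0 := by
  unfold posAxis
  simp only [Set.mem_setOf_eq, not_and_or, not_le]
  tauto

lemma ne_zero_of_not_posAxis {z : ℂ} (hz : z ∉ posAxis) : z ≠ 0 := by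
  rintro rfl
  exact hz ⟨rfl, le_refl 0⟩

def gz (z : ℂ) : ℝ := min 1 (max (-z.re) |z.im| / ‖z‖)

lemma gz_pos {z : ℂ} (hz : z ∉ posAxis) : 0 < gz z := by
  have habs : 0 < ‖z‖ := norm_pos_iff.mpr (ne_zero_of_not_posAxis hz)
  rcases not_posAxis_iff.mp hz with h | h
  · exact lt_min one_pos (div_pos (lt_max_iff.mpr (Or.inl (by linarith))) habs)
  · exact lt_min one_pos (div_pos (lt_max_iff.mpr (Or.inr (abs_pos.mpr h))) habs)

lemma gz_le {z : ℂ} (hz : z ∉ posAxis) {s : ℝ} (hs : 0 ≤ s) :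
    gz z ≤ ‖1 - z * (s : ℂ)‖ := by
  by_cases ha : z.re ≤ 0
  · have h1 : (1 - z * (s : ℂ)).re = 1 - z.re * s := by simp
    calc gz z ≤ 1 := min_le_left _ _
      _ ≤ |(1 - z * (s : ℂ)).re| := by
          rw [h1, _root_.abs_of_nonneg (by nlinarith)]
          nlinarith
      _ ≤ ‖1 - z * (s : ℂ)‖ := Complex.abs_re_le_norm _
  · push_neg at ha
    have habs : 0 < ‖z‖ := norm_pos_iff.mpr (ne_zero_of_not_posAxis hz)
    have key : (|z.im| / ‖z‖) ^ 2 ≤ (‖1 - z * (s : ℂ)‖) ^ 2 := by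
      rw [div_pow, Complex.sq_norm, Complex.sq_norm, _root_.sq_abs, Complex.normSq_apply,
        Complex.normSq_apply]
      simp only [Complex.sub_re, Complex.sub_im, Complex.one_re, Complex.one_im,
        Complex.mul_re, Complex.mul_im, Complex.ofReal_re, Complex.ofReal_im]
      rw [div_le_iff₀ (by nlinarith [mul_pos ha ha, mul_self_nonneg z.im])]
      nlinarith [sq_nonneg (z.re - s * (z.re ^ 2 + z.im ^ 2)), sq_nonneg z.im, sq_nonneg z.re]
    have h2 : |z.im| / ‖z‖ ≤ ‖1 - z * (s : ℂ)‖ := by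
      have := Real.sqrt_le_sqrt key
      rwa [Real.sqrt_sq (by positivity), Real.sqrt_sq (norm_nonneg _)] at this
    calc gz z ≤ max (-z.re) |z.im| / ‖z‖ := min_le_right _ _
      _ = |z.im| / ‖z‖ := by
          rw [max_eq_right]; linarith [abs_nonneg z.im]
      _ ≤ _ := h2

lemma den_lb {z : ℂ} (hz : z ∉ posAxis) (t : ℝ) :
    gz z ≤ ‖1 - z * (t : ℂ) ^ 2‖ := by
  have := gz_le hz (sq_nonneg t)
  rwa [Complex.ofReal_pow] at this

lemma den_ne {z : ℂ} (hz : z ∉ posAxis) (t : ℝ) : (1 - z * (t : ℂ) ^ 2) ≠ 0 := by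
  intro h
  have := den_lb hz t
  rw [h] at this
  simp at this
  linarith [gz_pos hz]

def Iz (nu : Measure ℝ) (z : ℂ) : ℂ := ∫ t : ℝ, (1 - z * (t : ℂ) ^ 2)⁻¹ ∂nu

lemma continuous_den (z : ℂ) : Continuous fun t : ℝ => (1 - z * (t : ℂ) ^ 2) := by
  continuity

lemma continuous_inv_den {z : ℂ} (hz : z ∉ posAxis) :
    Continuous fun t : ℝ => (1 - z * (t : ℂ) ^ 2)⁻¹ :=
  (continuous_den z).inv₀ fun t => den_ne hz t

lemma norm_inv_den_le {z : ℂ} (hz : z ∉ posAxis) (t : ℝ) :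
    ‖(1 - z * (t : ℂ) ^ 2)⁻¹‖ ≤ (gz z)⁻¹ := by
  rw [norm_inv]
  exact inv_anti₀ (gz_pos hz) (den_lb hz t)

lemma integrable_inv_den (nu : Measure ℝ) [IsFiniteMeasure nu] {z : ℂ} (hz : z ∉ posAxis) :
    Integrable (fun t : ℝ => (1 - z * (t : ℂ) ^ 2)⁻¹) nu :=
  Integrable.mono' (integrable_const ((gz z)⁻¹))
    (continuous_inv_den hz).aestronglyMeasurable (ae_of_all _ (norm_inv_den_le hz))

lemma isOpen_Omega : IsOpen {z : ℂ | z ∉ posAxis} := by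
  rw [show {z : ℂ | z ∉ posAxis} = posAxisᶜ from rfl, isOpen_compl_iff]
  have : posAxis = {z : ℂ | z.im = 0} ∩ {z : ℂ | 0 ≤ z.re} := rfl
  rw [this]
  exact (isClosed_eq Complex.continuous_im continuous_const).inter
    (isClosed_le continuous_const Complex.continuous_re)

lemma eventually_good {z₀ : ℂ} (hz : z₀ ∉ posAxis) :
    ∃ ε > (0 : ℝ), ∀ z ∈ Metric.ball z₀ ε,
      z ∉ posAxis ∧ gz z₀ / 2 ≤ gz z ∧ ‖z₀‖ / 2 ≤ ‖z‖ := by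
  have habs : 0 < ‖z₀‖ := norm_pos_iff.mpr (ne_zero_of_not_posAxis hz)
  have hgc : ContinuousAt gz z₀ := by
    have hnum : ContinuousAt (fun z : ℂ => max (-z.re) |z.im| / ‖z‖) z₀ :=
      ContinuousAt.div
        ((Complex.continuous_re.neg.max Complex.continuous_im.abs).continuousAt)
        continuous_norm.continuousAt (ne_of_gt habs)
    exact Filter.Tendsto.min tendsto_const_nhds hnum
  have h1 : ∀ᶠ z in 𝓝 z₀, z ∉ posAxis := isOpen_Omega.eventually_mem hz
  have h2 : ∀ᶠ z in 𝓝 z₀, gz z₀ / 2 ≤ gz z :=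
    hgc.eventually (eventually_ge_nhds (by linarith [gz_pos hz]))
  have h3 : ∀ᶠ z in 𝓝 z₀, ‖z₀‖ / 2 ≤ ‖z‖ :=
    continuous_norm.continuousAt.eventually (eventually_ge_nhds (by linarith))
  have := (h1.and (h2.and h3))
  rw [Metric.eventually_nhds_iff_ball] at this
  obtain ⟨ε, hε, h⟩ := this
  exact ⟨ε, hε, fun z hzb => ⟨(h z hzb).1, (h z hzb).2.1, (h z hzb).2.2⟩⟩

lemma differentiableAt_Iz (nu : Measure ℝ) [IsFiniteMeasure nu] {z₀ : ℂ}
    (h0 : z₀ ∉ posAxis) : DifferentiableAt ℂ (Iz nu) z₀ := by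
  obtain ⟨ε, εpos, hball⟩ := eventually_good h0
  set m : ℝ := gz z₀ / 2 with hm
  have hmpos : 0 < m := by have := gz_pos h0; simp only [hm]; linarith
  set r : ℝ := ‖z₀‖ / 2 with hr
  have hrpos : 0 < r := by
    have := norm_pos_iff.mpr (ne_zero_of_not_posAxis h0); simp only [hr]; linarith
  have key := hasDerivAt_integral_of_dominated_loc_of_deriv_le (μ := nu)
    (F := fun (z : ℂ) (t : ℝ) => (1 - z * (t : ℂ) ^ 2)⁻¹)
    (F' := fun (z : ℂ) (t : ℝ) => (t : ℂ) ^ 2 / (1 - z * (t : ℂ) ^ 2) ^ 2)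
    (x₀ := z₀) (bound := fun _ => r⁻¹ * (m⁻¹ ^ 2 + m⁻¹)) (Metric.ball_mem_nhds z₀ εpos)
    ?_ (integrable_inv_den nu h0) ?_ ?_ (integrable_const _) ?_
  · exact key.2.differentiableAt
  · filter_upwards [Metric.ball_mem_nhds z₀ εpos] with z hzb
    exact (continuous_inv_den (hball z hzb).1).aestronglyMeasurable
  · apply Continuous.aestronglyMeasurable
    exact (continuous_ofReal.pow 2).div ((continuous_den z₀).pow 2)
      fun t => pow_ne_zero 2 (den_ne h0 t)
  · refine ae_of_all _ fun t z hzb => ?_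
    obtain ⟨hzΩ, hgz, habs⟩ := hball z hzb
    have hz0 : z ≠ 0 := ne_zero_of_not_posAxis hzΩ
    have hd : (1 - z * (t : ℂ) ^ 2) ≠ 0 := den_ne hzΩ t
    have hdl : m ≤ ‖1 - z * (t : ℂ) ^ 2‖ := le_trans hgz (den_lb hzΩ t)
    have heq : (t : ℂ) ^ 2 / (1 - z * (t : ℂ) ^ 2) ^ 2
        = z⁻¹ * ((1 - z * (t : ℂ) ^ 2)⁻¹ ^ 2 - (1 - z * (t : ℂ) ^ 2)⁻¹) := by
      field_simp
      ring
    show ‖(t : ℂ) ^ 2 / (1 - z * (t : ℂ) ^ 2) ^ 2‖ ≤ r⁻¹ * (m⁻¹ ^ 2 + m⁻¹)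
    rw [heq]
    have hinv : ‖(1 - z * (t : ℂ) ^ 2)⁻¹‖ ≤ m⁻¹ := by
      rw [norm_inv]; exact inv_anti₀ hmpos hdl
    have hinvz : ‖z⁻¹‖ ≤ r⁻¹ := by
      rw [norm_inv]; exact inv_anti₀ hrpos habs
    calc ‖z⁻¹ * ((1 - z * (t : ℂ) ^ 2)⁻¹ ^ 2 - (1 - z * (t : ℂ) ^ 2)⁻¹)‖
        = ‖z⁻¹‖ * ‖(1 - z * (t : ℂ) ^ 2)⁻¹ ^ 2 - (1 - z * (t : ℂ) ^ 2)⁻¹‖ := norm_mul _ _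
      _ ≤ r⁻¹ * (m⁻¹ ^ 2 + m⁻¹) := by
          apply mul_le_mul hinvz _ (norm_nonneg _) (by positivity)
          calc ‖(1 - z * (t : ℂ) ^ 2)⁻¹ ^ 2 - (1 - z * (t : ℂ) ^ 2)⁻¹‖
              ≤ ‖(1 - z * (t : ℂ) ^ 2)⁻¹ ^ 2‖ + ‖(1 - z * (t : ℂ) ^ 2)⁻¹‖ := norm_sub_le _ _
            _ ≤ m⁻¹ ^ 2 + m⁻¹ := by
                rw [norm_pow]
                gcongr
  · refine ae_of_all _ fun t z hzb => ?_
    have hd : (1 - z * (t : ℂ) ^ 2) ≠ 0 := den_ne (hball z hzb).1 t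
    have h1 : HasDerivAt (fun z : ℂ => 1 - z * (t : ℂ) ^ 2) (-(t : ℂ) ^ 2) z := by
      simpa using ((hasDerivAt_id z).mul_const ((t : ℂ) ^ 2)).const_sub 1
    have := h1.inv hd
    exact this.congr_deriv (by ring)

lemma integral_cim {f : ℝ → ℂ} {ν : Measure ℝ} (hf : Integrable f ν) :
    (∫ t, f t ∂ν).im = ∫ t, (f t).im ∂ν := by
  have := integral_im (μ := ν) hf
  simpa using this.symm

lemma integral_cre {f : ℝ → ℂ} {ν : Measure ℝ} (hf : Integrable f ν) :
    (∫ t, f t ∂ν).re = ∫ t, (f t).re ∂ν := by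
  have := integral_re (μ := ν) hf
  simpa using this.symm

lemma Mt_eq (μ : Measure ℝ) [IsProbabilityMeasure μ] {z : ℂ} (hz : z ∉ posAxis) :
    Mt μ z = Iz μ z - 1 := by
  unfold Mt Iz
  have h1 : ∫ t : ℝ, z * (t : ℂ) ^ 2 / (1 - z * (t : ℂ) ^ 2) ∂μ
      = ∫ t : ℝ, ((1 - z * (t : ℂ) ^ 2)⁻¹ - 1) ∂μ := by
    refine integral_congr_ae (ae_of_all _ fun t => ?_)
    have hd := den_ne hz t
    field_simp
    ring
  rw [h1, integral_sub (integrable_inv_den μ hz) (integrable_const 1)]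
  simp

lemma rectC_eq (G : Measure ℝ) [IsFiniteMeasure G] {z : ℂ} (hz : z ∉ posAxis) :
    rectC G z = (z + 1) * Iz G z - ((G Set.univ).toReal : ℂ) := by
  have hz0 : z ≠ 0 := ne_zero_of_not_posAxis hz
  unfold rectC Iz
  have key : ∀ t : ℝ, (1 + (t : ℂ) ^ 2) / (1 - z * (t : ℂ) ^ 2)
      = (1 + z⁻¹) * (1 - z * (t : ℂ) ^ 2)⁻¹ - z⁻¹ * 1 := fun t => by
    have hd := den_ne hz t
    have hd' : 1 - (t : ℂ) ^ 2 * z ≠ 0 := by rwa [mul_comm]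
    field_simp
    ring
  rw [integral_congr_ae (ae_of_all _ key),
    integral_sub ((integrable_inv_den G hz).const_mul _) ((integrable_const (1 : ℂ)).const_mul _),
    integral_const_mul, integral_const_mul, integral_const]
  simp only [Complex.real_smul, smul_eq_mul, mul_one]
  field_simp
  rfl

lemma im_inv_den (z : ℂ) (t : ℝ) :
    ((1 - z * (t : ℂ) ^ 2)⁻¹).im = z.im * t ^ 2 / Complex.normSq (1 - z * (t : ℂ) ^ 2) := by
  rw [Complex.inv_im]
  have h2 : (1 - z * (t : ℂ) ^ 2).im = -(z.im * t ^ 2) := by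
    simp [← Complex.ofReal_pow]
  rw [h2, neg_neg]

lemma z_mul_inv_den (z : ℂ) (t : ℝ) (hd : (1 - z * (t : ℂ) ^ 2) ≠ 0) :
    (z * (1 - z * (t : ℂ) ^ 2)⁻¹).im = z.im / Complex.normSq (1 - z * (t : ℂ) ^ 2) := by
  have hN : Complex.normSq (1 - z * (t : ℂ) ^ 2) ≠ 0 := by
    simpa [Complex.normSq_eq_zero] using hd
  have h1 : (1 - z * (t : ℂ) ^ 2).re = 1 - z.re * t ^ 2 := by
    simp [← Complex.ofReal_pow]
  have h2 : (1 - z * (t : ℂ) ^ 2).im = -(z.im * t ^ 2) := by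
    simp [← Complex.ofReal_pow]
  rw [Complex.mul_im, Complex.inv_re, Complex.inv_im, h1, h2]
  field_simp
  ring

lemma zIz_eq (nu : Measure ℝ) (z : ℂ) :
    z * Iz nu z = ∫ t : ℝ, z * (1 - z * (t : ℂ) ^ 2)⁻¹ ∂nu :=
  (integral_const_mul z _).symm

lemma zIz_im_pos (μ : Measure ℝ) [IsProbabilityMeasure μ] {z : ℂ} (hz : z ∉ posAxis)
    (hb : 0 < z.im) : 0 < (z * Iz μ z).im := by
  have hint : Integrable (fun t : ℝ => z * (1 - z * (t : ℂ) ^ 2)⁻¹) μ :=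
    (integrable_inv_den μ hz).const_mul z
  rw [zIz_eq, integral_cim hint]
  have hpos : ∀ t : ℝ, 0 < (z * (1 - z * (t : ℂ) ^ 2)⁻¹).im := fun t => by
    rw [z_mul_inv_den z t (den_ne hz t)]
    exact div_pos hb (Complex.normSq_pos.mpr (den_ne hz t))
  refine (integral_pos_iff_support_of_nonneg_ae (ae_of_all _ fun t => (hpos t).le)
    hint.im).mpr ?_
  have hsupp : (Function.support fun t : ℝ => (z * (1 - z * (t : ℂ) ^ 2)⁻¹).im) = Set.univ :=
    Set.eq_univ_iff_forall.mpr fun t => (hpos t).ne'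
  rw [hsupp]
  simp

lemma Iz_im_nonneg (μ : Measure ℝ) [IsProbabilityMeasure μ] {z : ℂ} (hz : z ∉ posAxis)
    (hb : 0 ≤ z.im) : 0 ≤ (Iz μ z).im := by
  rw [Iz, integral_cim (integrable_inv_den μ hz)]
  refine integral_nonneg fun t => ?_
  rw [im_inv_den]
  exact div_nonneg (mul_nonneg hb (sq_nonneg t)) (Complex.normSq_nonneg _)

lemma Iz_im_zero (μ : Measure ℝ) [IsProbabilityMeasure μ] {z : ℂ} (hz : z ∉ posAxis)
    (hb : z.im = 0) : (Iz μ z).im = 0 := by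
  rw [Iz, integral_cim (integrable_inv_den μ hz)]
  refine integral_eq_zero_of_ae (ae_of_all _ fun t => ?_)
  have h : ((1 - z * (t : ℂ) ^ 2)⁻¹).im = 0 := by rw [im_inv_den, hb]; simp
  simpa using h

lemma zIz_im_zero (μ : Measure ℝ) [IsProbabilityMeasure μ] {z : ℂ} (hz : z ∉ posAxis)
    (hb : z.im = 0) : (z * Iz μ z).im = 0 := by
  rw [zIz_eq, integral_cim ((integrable_inv_den μ hz).const_mul z)]
  refine integral_eq_zero_of_ae (ae_of_all _ fun t => ?_)
  have h : (z * (1 - z * (t : ℂ) ^ 2)⁻¹).im = 0 := by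
    rw [z_mul_inv_den z t (den_ne hz t), hb]; simp
  simpa using h

lemma inv_den_real (x t : ℝ) (hx : x < 0) :
    (1 - (x : ℂ) * (t : ℂ) ^ 2)⁻¹ = (((1 - x * t ^ 2)⁻¹ : ℝ) : ℂ) := by
  push_cast
  ring

lemma den_real_pos (x t : ℝ) (hx : x < 0) : 0 < 1 - x * t ^ 2 := by
  nlinarith [sq_nonneg t]

lemma zIz_re_neg (μ : Measure ℝ) [IsProbabilityMeasure μ] {x : ℝ} (hx : x < 0) :
    ((x : ℂ) * Iz μ (x : ℂ)).re < 0 := by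
  have hz : (x : ℂ) ∉ posAxis := not_posAxis_iff.mpr (Or.inl (by simpa using hx))
  have hint : Integrable (fun t : ℝ => (x : ℂ) * (1 - (x : ℂ) * (t : ℂ) ^ 2)⁻¹) μ :=
    (integrable_inv_den μ hz).const_mul _
  rw [zIz_eq, integral_cre hint]
  have hrew : ∀ t : ℝ, ((x : ℂ) * (1 - (x : ℂ) * (t : ℂ) ^ 2)⁻¹).re
      = x * (1 - x * t ^ 2)⁻¹ := fun t => by
    rw [inv_den_real x t hx, ← Complex.ofReal_mul]
    exact Complex.ofReal_re _
  have hneg : ∀ t : ℝ, x * (1 - x * t ^ 2)⁻¹ < 0 := fun t =>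
    mul_neg_of_neg_of_pos hx (inv_pos.mpr (den_real_pos x t hx))
  rw [← neg_pos, ← integral_neg]
  refine (integral_pos_iff_support_of_nonneg_ae
    (ae_of_all _ fun t => by simp only [Pi.zero_apply]; rw [hrew t]; linarith [hneg t])
    ?_).mpr ?_
  · exact hint.re.neg
  · have hsupp : (Function.support fun t : ℝ =>
        -((x : ℂ) * (1 - (x : ℂ) * (t : ℂ) ^ 2)⁻¹).re) = Set.univ :=
      Set.eq_univ_iff_forall.mpr fun t => by
        have hgt : 0 < -((x : ℂ) * (1 - (x : ℂ) * (t : ℂ) ^ 2)⁻¹).re := by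
          rw [hrew t]; linarith [hneg t]
        exact Function.mem_support.mpr (ne_of_gt hgt)
    rw [hsupp]
    simp

lemma Iz_re_nonneg_real (μ : Measure ℝ) [IsProbabilityMeasure μ] {x : ℝ} (hx : x < 0) :
    0 ≤ (Iz μ (x : ℂ)).re := by
  have hz : (x : ℂ) ∉ posAxis := not_posAxis_iff.mpr (Or.inl (by simpa using hx))
  rw [Iz, integral_cre (integrable_inv_den μ hz)]
  refine integral_nonneg fun t => ?_
  rw [inv_den_real x t hx, Complex.ofReal_re]
  exact inv_nonneg.mpr (den_real_pos x t hx).le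

lemma Mt_conj (μ : Measure ℝ) (z : ℂ) :
    Mt μ (starRingEnd ℂ z) = starRingEnd ℂ (Mt μ z) := by
  unfold Mt
  rw [← integral_conj]
  refine integral_congr_ae (ae_of_all _ fun t => ?_)
  simp [map_div₀, Complex.conj_ofReal]

lemma Ht_conj (l : ℝ) (μ : Measure ℝ) (z : ℂ) :
    Ht l μ (starRingEnd ℂ z) = starRingEnd ℂ (Ht l μ z) := by
  unfold Ht
  rw [Mt_conj]
  simp [map_mul, map_add, Complex.conj_ofReal]

lemma not_posAxis_conj {z : ℂ} (hz : z ∉ posAxis) : starRingEnd ℂ z ∉ posAxis := by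
  rw [not_posAxis_iff] at hz ⊢
  simp only [Complex.conj_re, Complex.conj_im, neg_ne_zero]
  exact hz

lemma Ht_not_posAxis (l : ℝ) (hl0 : 0 < l) (hl1 : l < 1) (μ : Measure ℝ)
    [IsProbabilityMeasure μ] {z : ℂ} (hz : z ∉ posAxis) : Ht l μ z ∉ posAxis := by
  have upper : ∀ w : ℂ, w ∉ posAxis → 0 < w.im → Ht l μ w ∉ posAxis := by
    intro w hw hb hmem
    have hH : Ht l μ w = w * Iz μ w * (1 + (l : ℂ) * (Iz μ w - 1)) := by
      unfold Ht; rw [Mt_eq μ hw]; ring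
    set I := Iz μ w with hIdef
    set Q : ℂ := 1 + (l : ℂ) * (I - 1) with hQdef
    have hQim : Q.im = l * I.im := by
      simp [hQdef, Complex.add_im, Complex.mul_im, Complex.sub_im, Complex.sub_re]
    have himI : 0 ≤ I.im := Iz_im_nonneg μ hw hb.le
    have hwim : 0 < (w * I).im := zIz_im_pos μ hw hb
    rw [hH] at hmem
    obtain ⟨him, hre⟩ := hmem
    have hwne : w * I ≠ 0 := fun h => by rw [h] at hwim; simp at hwim
    by_cases hQ0 : Q = 0
    · have hQim0 : I.im = 0 := by
        have h0 : Q.im = 0 := by rw [hQ0]; rfl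
        rw [hQim] at h0
        rcases mul_eq_zero.mp h0 with h | h
        · exact absurd h (ne_of_gt hl0)
        · exact h
      have hIre : 0 < I.re := by
        have hmul : (w * I).im = w.re * I.im + w.im * I.re := Complex.mul_im w I
        rw [hQim0] at hmul
        nlinarith
      have hQre : Q.re = 1 + l * (I.re - 1) := by
        simp [hQdef, Complex.add_re, Complex.mul_re, Complex.sub_re, Complex.sub_im, hQim0]
      have h0 : Q.re = 0 := by rw [hQ0]; rfl
      rw [hQre] at h0
      nlinarith
    · set s : ℝ := (w * I * Q).re with hsdef
      have heq : w * I * Q = ((s : ℝ) : ℂ) :=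
        Complex.ext (by simp [hsdef]) (by simpa using him)
      have hQeq : Q = ((s : ℝ) : ℂ) * (w * I)⁻¹ := by
        rw [← heq, mul_comm (w * I) Q, mul_assoc, mul_inv_cancel₀ hwne, mul_one]
      have hQim2 : Q.im = s * (-(w * I).im / Complex.normSq (w * I)) := by
        rw [hQeq, Complex.mul_im, Complex.ofReal_re, Complex.ofReal_im, Complex.inv_im]
        ring
      have hN : 0 < Complex.normSq (w * I) := Complex.normSq_pos.mpr hwne
      have hQimnn : 0 ≤ Q.im := by rw [hQim]; exact mul_nonneg hl0.le himI
      have h1 : 0 ≤ -(s * (w * I).im) / Complex.normSq (w * I) := by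
        have := hQimnn
        rw [hQim2] at this
        calc (0 : ℝ) ≤ s * (-(w * I).im / Complex.normSq (w * I)) := this
          _ = -(s * (w * I).im) / Complex.normSq (w * I) := by ring
      have h2 : s * (w * I).im ≤ 0 := by
        have := (div_nonneg_iff.mp h1)
        rcases this with ⟨h, _⟩ | ⟨_, h⟩
        · linarith
        · linarith
      have hs0 : s = 0 := by
        have hsle : s ≤ 0 := by nlinarith
        exact le_antisymm hsle hre
      have hzero : w * I * Q = 0 := by rw [heq, hs0]; simp
      rcases mul_eq_zero.mp hzero with h | h
      · exact hwne h
      · exact hQ0 h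
  have realcase : ∀ w : ℂ, w.im = 0 → w.re < 0 → Ht l μ w ∉ posAxis := by
    intro w him0 hreneg
    have hw : w ∉ posAxis := not_posAxis_iff.mpr (Or.inl hreneg)
    have hH : Ht l μ w = w * Iz μ w * (1 + (l : ℂ) * (Iz μ w - 1)) := by
      unfold Ht; rw [Mt_eq μ hw]; ring
    obtain ⟨x, hx⟩ : ∃ x : ℝ, w = (x : ℂ) :=
      ⟨w.re, by apply Complex.ext <;> simp [him0]⟩
    have hxneg : x < 0 := by rw [hx] at hreneg; simpa using hreneg
    set I := Iz μ w with hIdef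
    set Q : ℂ := 1 + (l : ℂ) * (I - 1) with hQdef
    have hIim : I.im = 0 := Iz_im_zero μ hw him0
    have hQim : Q.im = 0 := by
      simp [hQdef, Complex.add_im, Complex.mul_im, Complex.sub_im, Complex.sub_re, hIim]
    have hIre : 0 ≤ I.re := by rw [hIdef, hx]; exact Iz_re_nonneg_real μ hxneg
    have hQre : 0 < Q.re := by
      have : Q.re = 1 + l * (I.re - 1) := by
        simp [hQdef, Complex.add_re, Complex.mul_re, Complex.sub_re, Complex.sub_im, hIim]
      rw [this]
      nlinarith
    have hwim : (w * I).im = 0 := zIz_im_zero μ hw him0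
    have hwre : (w * I).re < 0 := by rw [hIdef, hx]; exact zIz_re_neg μ hxneg
    have : (Ht l μ w).re < 0 := by
      rw [hH, Complex.mul_re, hwim, hQim]
      simpa using mul_neg_of_neg_of_pos hwre hQre
    exact not_posAxis_iff.mpr (Or.inl this)
  rcases lt_trichotomy z.im 0 with hneg | hzero | hpos
  · have h1 : starRingEnd ℂ z ∉ posAxis := not_posAxis_conj hz
    have h2 : 0 < (starRingEnd ℂ z).im := by simp only [Complex.conj_im]; linarith
    have h3 := upper _ h1 h2
    intro hmem
    apply h3
    rw [Ht_conj]
    obtain ⟨h4, h5⟩ := hmem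
    exact ⟨by simp [Complex.conj_im, h4], by simpa using h5⟩
  · refine realcase z hzero ?_
    rcases not_posAxis_iff.mp hz with h | h
    · exact h
    · exact absurd hzero h
  · exact upper z hz hpos

lemma isPreconnected_Omega : IsPreconnected {z : ℂ | z ∉ posAxis} := by
  have hseg : ∀ w ∈ {z : ℂ | z ∉ posAxis}, segment ℝ (-1 : ℂ) w ⊆ {z : ℂ | z ∉ posAxis} := by
    intro w hw p hp
    rw [segment_eq_image] at hp
    obtain ⟨θ, hθ, rfl⟩ := hp
    obtain ⟨h0, h1⟩ := hθ
    rw [Set.mem_setOf_eq, not_posAxis_iff]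
    have hre : ((1 - θ) • (-1 : ℂ) + θ • w).re = -(1 - θ) + θ * w.re := by
      simp [Complex.real_smul]
    have him : ((1 - θ) • (-1 : ℂ) + θ • w).im = θ * w.im := by
      simp [Complex.real_smul]
    rcases not_posAxis_iff.mp hw with h | h
    · left
      rw [hre]
      rcases eq_or_lt_of_le h1 with h2 | h2
      · rw [h2]; simpa using h
      · have : θ * w.re ≤ 0 := mul_nonpos_iff.mpr (Or.inl ⟨h0, h.le⟩)
        linarith
    · by_cases hθ0 : θ = 0
      · left; rw [hre, hθ0]; simp
      · right; rw [him]; exact mul_ne_zero hθ0 h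
  have hm1 : (-1 : ℂ) ∈ {z : ℂ | z ∉ posAxis} := by
    rw [Set.mem_setOf_eq, not_posAxis_iff]; left; simp
  have hun : {z : ℂ | z ∉ posAxis}
      = ⋃₀ {s : Set ℂ | ∃ w ∈ {z : ℂ | z ∉ posAxis}, s = segment ℝ (-1 : ℂ) w} := by
    apply Set.Subset.antisymm
    · intro w hw
      exact ⟨segment ℝ (-1 : ℂ) w, ⟨w, hw, rfl⟩, right_mem_segment ℝ (-1 : ℂ) w⟩
    · rintro p ⟨s, ⟨w, hw, rfl⟩, hp⟩
      exact hseg w hw hp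
  rw [hun]
  apply isPreconnected_sUnion (-1 : ℂ)
  · rintro s ⟨w, hw, rfl⟩; exact left_mem_segment ℝ (-1 : ℂ) w
  · rintro s ⟨w, hw, rfl⟩; exact (convex_segment _ _).isPreconnected

end Stmt10Aux

/-- If `μ` is `⊞_λ`-infinitely divisible with rectangular `R`-transform
`C = rectC G`, then `H_μ(z) = z T(C(H_μ(z)))` on all of `ℂ∖[0,∞)` (so `H_μ` is a right
inverse of `w ↦ w / T(C(w))`), and `H_μ` is injective on `ℂ∖[0,∞)`. -/


theorem stmt10 (l : ℝ) (hl : l ∈ Set.Ioo (0 : ℝ) 1)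
    (μ : Measure ℝ) [IsProbabilityMeasure μ]
    (hμsym : Measure.map (fun t : ℝ => -t) μ = μ)
    (G : Measure ℝ) [IsFiniteMeasure G]
    (hGsym : Measure.map (fun t : ℝ => -t) G = G)
    (hID : IsRectInfDiv l μ G) :
    (∀ z : ℂ, z ∉ posAxis → Ht l μ z = z * Tfun l (rectC G (Ht l μ z))) ∧
    Set.InjOn (Ht l μ) {z : ℂ | z ∉ posAxis} := by
  obtain ⟨hl0, hl1⟩ := hl
  set Ω : Set ℂ := {z : ℂ | z ∉ posAxis} with hΩ
  have hmaps : ∀ z ∈ Ω, Ht l μ z ∈ Ω := fun z hz => Stmt10Aux.Ht_not_posAxis l hl0 hl1 μ hz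
  have hIzdiff : DifferentiableOn ℂ (Stmt10Aux.Iz μ) Ω :=
    fun z hz => (Stmt10Aux.differentiableAt_Iz μ hz).differentiableWithinAt
  have hIzGdiff : DifferentiableOn ℂ (Stmt10Aux.Iz G) Ω :=
    fun z hz => (Stmt10Aux.differentiableAt_Iz G hz).differentiableWithinAt
  set F : ℂ → ℂ :=
    fun z => z * Stmt10Aux.Iz μ z * (1 + (l : ℂ) * (Stmt10Aux.Iz μ z - 1)) with hF
  have hFdiff : DifferentiableOn ℂ F Ω := by
    apply DifferentiableOn.mul
    · exact DifferentiableOn.mul differentiableOn_id hIzdiff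
    · exact (differentiableOn_const _).add
        ((differentiableOn_const _).mul (hIzdiff.sub (differentiableOn_const _)))
  have hHtF : ∀ z ∈ Ω, Ht l μ z = F z := fun z hz => by
    simp only [hF]
    rw [show Ht l μ z = z * (1 + Mt μ z) * (1 + (l : ℂ) * Mt μ z) from rfl,
      Stmt10Aux.Mt_eq μ hz]
    ring
  have hHtdiff : DifferentiableOn ℂ (Ht l μ) Ω := hFdiff.congr hHtF
  set c : ℂ := ((G Set.univ).toReal : ℂ) with hc
  set RC : ℂ → ℂ := fun w => (w + 1) * Stmt10Aux.Iz G w - c with hRC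
  have hRCdiff : DifferentiableOn ℂ RC Ω :=
    ((differentiableOn_id.add (differentiableOn_const _)).mul hIzGdiff).sub
      (differentiableOn_const _)
  have hTdiff : Differentiable ℂ (Tfun l) := by
    have h : Tfun l = fun w => ((l : ℂ) * w + 1) * (w + 1) := rfl
    rw [h]
    exact (((differentiable_const _).mul differentiable_id).add
      (differentiable_const _)).mul (differentiable_id.add (differentiable_const _))
  set g : ℂ → ℂ := fun z => z * Tfun l (rectC G (Ht l μ z)) with hg
  have hgdiff : DifferentiableOn ℂ g Ω := by
    have hcomp : DifferentiableOn ℂ (fun z => RC (Ht l μ z)) Ω :=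
      hRCdiff.comp hHtdiff fun z hz => hmaps z hz
    have h2 : DifferentiableOn ℂ (fun z => z * Tfun l (RC (Ht l μ z))) Ω :=
      differentiableOn_id.mul (hTdiff.comp_differentiableOn hcomp)
    apply h2.congr
    intro z hz
    simp only [hg, hRC]
    rw [Stmt10Aux.rectC_eq G (hmaps z hz)]
  have hfan : AnalyticOnNhd ℂ (Ht l μ) Ω := hHtdiff.analyticOnNhd Stmt10Aux.isOpen_Omega
  have hgan : AnalyticOnNhd ℂ g Ω := hgdiff.analyticOnNhd Stmt10Aux.isOpen_Omega
  obtain ⟨ε, hε, hid⟩ := hID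
  set z₀ : ℂ := ((-(ε / 2) : ℝ) : ℂ) with hz₀def
  have hz₀ : z₀ ∈ Ω := by
    rw [hΩ, Set.mem_setOf_eq, Stmt10Aux.not_posAxis_iff]
    left
    simp only [hz₀def, Complex.ofReal_re]
    linarith
  set u : ℕ → ℂ := fun n => ((-(ε / 2) - ε / (4 * (n + 1)) : ℝ) : ℂ) with hu
  have hd4 : ∀ n : ℕ, (0 : ℝ) < 4 * ((n : ℝ) + 1) := fun n => by positivity
  have hun : ∀ n : ℕ, (-(ε / 2) - ε / (4 * ((n : ℝ) + 1)) : ℝ) ∈ Set.Ioo (-ε) (0 : ℝ) := by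
    intro n
    have h4 := hd4 n
    have hdpos : 0 < ε / (4 * ((n : ℝ) + 1)) := div_pos hε h4
    have hle : ε / (4 * ((n : ℝ) + 1)) ≤ ε / 4 := by
      rw [div_le_div_iff₀ h4 (by norm_num)]
      nlinarith [Nat.cast_nonneg (α := ℝ) n]
    constructor
    · linarith
    · linarith
  have hunz : Tendsto u atTop (𝓝[≠] z₀) := by
    apply tendsto_nhdsWithin_of_tendsto_nhds_of_eventually_within
    · have h1 : Tendsto (fun n : ℕ => 1 / ((n : ℝ) + 1)) atTop (𝓝 0) :=
        tendsto_one_div_add_atTop_nhds_zero_nat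
      have h0 : Tendsto (fun n : ℕ => ε / (4 * ((n : ℝ) + 1))) atTop (𝓝 0) := by
        have h2 := h1.const_mul (ε / 4)
        simp only [mul_zero] at h2
        convert h2 using 2 with n
        field_simp
      have h3 : Tendsto (fun n : ℕ => (-(ε / 2) - ε / (4 * ((n : ℝ) + 1)))) atTop
          (𝓝 (-(ε / 2))) := by
        have := Filter.Tendsto.sub
          (tendsto_const_nhds : Tendsto (fun _ : ℕ => -(ε / 2)) atTop (𝓝 (-(ε / 2)))) h0
        simpa using this
      exact Complex.continuous_ofReal.continuousAt.tendsto.comp h3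
    · refine Eventually.of_forall fun n => ?_
      have hdpos : 0 < ε / (4 * ((n : ℝ) + 1)) := div_pos hε (hd4 n)
      simp only [hu, Set.mem_compl_iff, Set.mem_singleton_iff, hz₀def]
      intro hcontra
      rw [Complex.ofReal_inj] at hcontra
      linarith
  have hfreq : ∃ᶠ z in 𝓝[≠] z₀, Ht l μ z = g z := by
    apply hunz.frequently
    apply Frequently.of_forall
    intro n
    exact hid _ (hun n)
  have hEq : Set.EqOn (Ht l μ) g Ω :=
    hfan.eqOn_of_preconnected_of_frequently_eq hgan Stmt10Aux.isPreconnected_Omega hz₀ hfreq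
  constructor
  · intro z hz
    exact hEq hz
  · intro z1 h1 z2 h2 heq
    have e1 := hEq h1
    have e2 := hEq h2
    simp only [hg] at e1 e2
    rw [heq] at e1
    by_cases hT : Tfun l (rectC G (Ht l μ z2)) = 0
    · exfalso
      rw [hT, mul_zero] at e1
      rw [e1] at hT
      norm_num [rectC, Tfun] at hT
    · exact mul_right_cancel₀ hT (e1.symm.trans e2)

end
end
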